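/- Let w ∈ W be a non-spiral element of the affine Weyl group of type Ã₂, let α be the unique root pointing into the chamber of w, and let k ∈ ℤ be such that k − 1 < (α,v) < k for all v ∈ wA₀ (the alcove of w lies between H_{α,k−1} and H_{α,k}). Then k ≥ 1. Moreover, if cl(wA₀) ∩ H_{α,k} contains more than one point (it is an edge of the alcove wA₀), then ℓ(s_{α,k}w) = ℓ(w) + 1; and if cl(wA₀) ∩ H_{α,k} is a single point (a vertex of the alcove), then ℓ(s_{α,k}w) = ℓ(w) + 3. -/

import Mathlib

noncomputable section

open scoped RealInnerProductSpace

/-- The plane `V = ℝ²`. -/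
abbrev V : Type := EuclideanSpace ℝ (Fin 2)

/-- The affine reflection in the hyperplane `H_{α,k}`. -/
def sRefl (α : V) (k : ℤ) (v : V) : V := v - (⟪α, v⟫ - (k : ℝ)) • α

/-- The positive roots `α₁, α₂, α̃ = α₁ + α₂` of the `A₂` root system. -/
def PosRoots (a1 a2 : V) : Set V := {a1, a2, a1 + a2}

/-- The root system `Φ` of type `A₂`. -/
def Phi (a1 a2 : V) : Set V := {α | α ∈ PosRoots a1 a2 ∨ -α ∈ PosRoots a1 a2}

/-- A permutation of `V` acting as the affine reflection `s_{α,k}` for some `α ∈ Φ`, `k ∈ ℤ`. -/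
def IsAffRefl (a1 a2 : V) (g : Equiv.Perm V) : Prop :=
  ∃ α ∈ Phi a1 a2, ∃ k : ℤ, ∀ v : V, g v = sRefl α k v

/-- The affine Weyl group of type `Ã₂`: the group of (affine) transformations of `V`
generated by all the affine reflections `s_{α,k}`, `α ∈ Φ`, `k ∈ ℤ`. -/
def AffWeyl (a1 a2 : V) : Subgroup (Equiv.Perm V) :=
  Subgroup.closure {g | IsAffRefl a1 a2 g}

/-- The action of an element of the affine Weyl group on the plane `V`. -/
def act {a1 a2 : V} (w : AffWeyl a1 a2) (v : V) : V := (w : Equiv.Perm V) v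

/-- `g` is one of the simple reflections `s₁ = s_{α₁,0}`, `s₂ = s_{α₂,0}`, `s₀ = s_{α̃,1}`. -/
def IsSimpleRefl (a1 a2 : V) (g : Equiv.Perm V) : Prop :=
  (∀ v : V, g v = sRefl a1 0 v) ∨ (∀ v : V, g v = sRefl a2 0 v) ∨
    (∀ v : V, g v = sRefl (a1 + a2) 1 v)

/-- The length function of the affine Weyl group `W` of type `Ã₂`, with respect to the
simple reflections. -/
def len (a1 a2 : V) (w : AffWeyl a1 a2) : ℕ :=
  sInf {n | ∃ l : List (AffWeyl a1 a2),
    (∀ g ∈ l, IsSimpleRefl a1 a2 (g : Equiv.Perm V)) ∧ l.length = n ∧ l.prod = w}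

/-- The reflections of `W` are the `s_{α,k}`, `α ∈ Φ`, `k ∈ ℤ`. -/
def IsReflW (a1 a2 : V) (g : Equiv.Perm V) : Prop := IsAffRefl a1 a2 g

/-- The Bruhat order on `W`: the partial order generated by `u < r * u` whenever `r` is a
reflection and `ℓ(u) < ℓ(r * u)`. -/
def BruhatLE (a1 a2 : V) (x w : AffWeyl a1 a2) : Prop :=
  Relation.ReflTransGen
    (fun a b => ∃ r : AffWeyl a1 a2, IsReflW a1 a2 (r : Equiv.Perm V) ∧ b = r * a ∧
      len a1 a2 a < len a1 a2 b) x w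

/-- The strict Bruhat order. -/
def BruhatLT (a1 a2 : V) (x w : AffWeyl a1 a2) : Prop := BruhatLE a1 a2 x w ∧ x ≠ w

/-- The fundamental alcove `A₀`. -/
def A0 (a1 a2 : V) : Set V :=
  {v | 0 < ⟪a1, v⟫ ∧ 0 < ⟪a2, v⟫ ∧ ⟪a1 + a2, v⟫ < 1}

/-- The fundamental `α`-root strip. -/
def Strip (α : V) : Set V := {v | 0 ≤ ⟪α, v⟫ ∧ ⟪α, v⟫ ≤ 1}

/-- The union of the three fundamental root strips. -/
def StripUnion (a1 a2 : V) : Set V := Strip a1 ∪ Strip a2 ∪ Strip (a1 + a2)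

/-- `w` is spiral if the alcove center `w q` lies in a fundamental root strip. -/
def IsSpiral (a1 a2 q : V) (w : AffWeyl a1 a2) : Prop :=
  (w : Equiv.Perm V) q ∈ StripUnion a1 a2

/-- The chambers: connected components of the complement of the union of the fundamental
root strips. -/
def IsChamber (a1 a2 : V) (C : Set V) : Prop :=
  ∃ v ∈ (StripUnion a1 a2)ᶜ, C = connectedComponentIn (StripUnion a1 a2)ᶜ v

/-- The chamber containing the alcove center `w q` (for non-spiral `w`). -/
def chamberOf (a1 a2 q : V) (w : AffWeyl a1 a2) : Set V :=
  connectedComponentIn (StripUnion a1 a2)ᶜ ((w : Equiv.Perm V) q)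

/-- The root hyperplane (line) `H_{α,k}`. -/
def Hplane (α : V) (k : ℤ) : Set V := {v | ⟪α, v⟫ = (k : ℝ)}

/-- `H_{α,i}` (with `α` a positive root and `i ∈ {0,1}`) is a wall of the chamber `C`:
the boundary of `C` meets `H_{α,i}` in more than one point (a ray). -/
def IsWall (a1 a2 : V) (C : Set V) (α : V) (i : ℤ) : Prop :=
  α ∈ PosRoots a1 a2 ∧ (i = 0 ∨ i = 1) ∧
    ∃ u ∈ frontier C ∩ Hplane α i, ∃ v ∈ frontier C ∩ Hplane α i, u ≠ v

/-- A chamber is even if both of its walls are among the fixed hyperplanes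
`H_{α₁,0}, H_{α₂,0}, H_{α̃,1}` of the simple reflections. -/
def IsEvenChamber (a1 a2 : V) (C : Set V) : Prop :=
  IsChamber a1 a2 C ∧ ∀ α i, IsWall a1 a2 C α i →
    ((α = a1 ∧ i = 0) ∨ (α = a2 ∧ i = 0) ∨ (α = a1 + a2 ∧ i = 1))

/-- `q^w_x = n^w_x - ℓ(w)`, where `n^w_x` is the number of reflections `r` with `r x ≤ w`. -/
def qInt (a1 a2 : V) (w x : AffWeyl a1 a2) : ℤ :=
  (Set.ncard {r : AffWeyl a1 a2 |
      IsReflW a1 a2 (r : Equiv.Perm V) ∧ BruhatLE a1 a2 (r * x) w} : ℤ)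
    - (len a1 a2 w : ℤ)

/-- The root `α ∈ Φ` points into the chamber `C`. -/
def PointsInto (a1 a2 : V) (C : Set V) (α : V) : Prop :=
  α ∈ Phi a1 a2 ∧ ∀ v ∈ C, v + α ∈ C

/-- `L(w)`: the subgroup generated by the simple reflections `s` with `s w < w`. -/
def Lsub (a1 a2 : V) (w : AffWeyl a1 a2) : Subgroup (AffWeyl a1 a2) :=
  Subgroup.closure {s | IsSimpleRefl a1 a2 (s : Equiv.Perm V) ∧ BruhatLT a1 a2 (s * w) w}

/-- `w` is twisted spiral if `w = z s` with `z` spiral of even length, `s` simple, and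
`ℓ(w) = ℓ(z) + 1`. -/
def IsTwistedSpiral (a1 a2 q : V) (w : AffWeyl a1 a2) : Prop :=
  ∃ z s : AffWeyl a1 a2, IsSpiral a1 a2 q z ∧ Even (len a1 a2 z) ∧
    IsSimpleRefl a1 a2 (s : Equiv.Perm V) ∧ w = z * s ∧ len a1 a2 w = len a1 a2 z + 1

-- ===== auxiliary development =====

-- matrices
def mmul (m m' : ℤ×ℤ×ℤ×ℤ) : ℤ×ℤ×ℤ×ℤ :=
  (m.1*m'.1 + m.2.1*m'.2.2.1, m.1*m'.2.1 + m.2.1*m'.2.2.2,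
   m.2.2.1*m'.1 + m.2.2.2*m'.2.2.1, m.2.2.1*m'.2.1 + m.2.2.2*m'.2.2.2)

def matL : List (ℤ×ℤ×ℤ×ℤ) := [(1,0,0,1),(-1,0,1,1),(1,1,0,-1),(-1,-1,1,0),(0,1,-1,-1),(0,-1,-1,0)]
def rowL : List (ℤ×ℤ) := [(1,0),(0,1),(1,1),(-1,0),(0,-1),(-1,-1)]

theorem matL_mul : ∀ m ∈ matL, ∀ m' ∈ matL, mmul m m' ∈ matL := by decide
theorem matL_mod : ∀ m ∈ matL, (m.1 - m.2.2.1) % 3 = 1 ∧ (m.2.1 - m.2.2.2) % 3 = 2 := by decide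
theorem matL_inv : ∀ m ∈ matL, ∃ m' ∈ matL, mmul m m' = (1,0,0,1) ∧ mmul m' m = (1,0,0,1) := by decide
theorem matL_rows : ∀ m ∈ matL, (m.1, m.2.1) ∈ rowL ∧ (m.2.2.1, m.2.2.2) ∈ rowL ∧
    (m.1 + m.2.2.1, m.2.1 + m.2.2.2) ∈ rowL := by decide
theorem rowL_neg : ∀ r ∈ rowL, ((-r.1, -r.2) : ℤ×ℤ) ∈ rowL := by decide

-- inner product helpers
theorem inner_sRefl (β α : V) (k : ℤ) (x : V) :
    ⟪β, sRefl α k x⟫ = ⟪β, x⟫ - (⟪α, x⟫ - k) * ⟪β, α⟫ := by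
  simp only [sRefl, inner_sub_right, real_inner_smul_right]

theorem sRefl_neg (α : V) (k : ℤ) (v : V) : sRefl (-α) k v = sRefl α (-k) v := by
  simp only [sRefl, inner_neg_left, smul_neg, neg_smul, Int.cast_neg]
  rw [sub_neg_eq_add, ← sub_neg_eq_add, ← neg_smul]
  ring_nf

theorem inj_aux (a1 a2 : V)
    (hnorm1 : ⟪a1, a1⟫ = 2) (hnorm2 : ⟪a2, a2⟫ = 2) (hip : ⟪a1, a2⟫ = -1)
    (x y : V) (h1 : ⟪a1, x⟫ = ⟪a1, y⟫) (h2 : ⟪a2, x⟫ = ⟪a2, y⟫) : x = y := by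
  simp only [PiLp.inner_apply, Fin.sum_univ_two, RCLike.inner_apply, conj_trivial] at *
  have hdet : (a1 0 * a2 1 - a1 1 * a2 0)^2 = 3 := by nlinarith [hnorm1, hnorm2, hip]
  have hd : a1 0 * a2 1 - a1 1 * a2 0 ≠ 0 := by
    intro h; rw [h] at hdet; norm_num at hdet
  have e0 : x 0 = y 0 := by
    have h3 : (a1 0 * a2 1 - a1 1 * a2 0) * (x 0 - y 0) = 0 := by
      linear_combination a2 1 * h1 - a1 1 * h2
    rcases mul_eq_zero.mp h3 with h | h
    · exact absurd h hd
    · linarith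
  have e1 : x 1 = y 1 := by
    have h3 : (a1 0 * a2 1 - a1 1 * a2 0) * (x 1 - y 1) = 0 := by
      linear_combination a1 0 * h2 - a2 0 * h1
    rcases mul_eq_zero.mp h3 with h | h
    · exact absurd h hd
    · linarith
  ext i; fin_cases i <;> assumption

theorem repr_aux (a1 a2 : V)
    (hnorm1 : ⟪a1, a1⟫ = 2) (hnorm2 : ⟪a2, a2⟫ = 2) (hip : ⟪a1, a2⟫ = -1) (v : V) :
    v = ((2*⟪a1,v⟫ + ⟪a2,v⟫)/3) • a1 + ((⟪a1,v⟫ + 2*⟪a2,v⟫)/3) • a2 := by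
  apply inj_aux a1 a2 hnorm1 hnorm2 hip
  · rw [inner_add_right, real_inner_smul_right, real_inner_smul_right, hnorm1, hip]; ring
  · rw [inner_add_right, real_inner_smul_right, real_inner_smul_right,
      real_inner_comm a1 a2, hip, hnorm2]; ring

-- the structure theorem
def AffData (a1 a2 : V) (g : Equiv.Perm V) (m : ℤ×ℤ×ℤ×ℤ) (u v : ℤ) : Prop :=
  ∀ x : V, ⟪a1, g x⟫ = m.1 * ⟪a1, x⟫ + m.2.1 * ⟪a2, x⟫ + u ∧
           ⟪a2, g x⟫ = m.2.2.1 * ⟪a1, x⟫ + m.2.2.2 * ⟪a2, x⟫ + v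

theorem aff_struct (a1 a2 : V)
    (hnorm1 : ⟪a1, a1⟫ = 2) (hnorm2 : ⟪a2, a2⟫ = 2) (hip : ⟪a1, a2⟫ = -1)
    (w : AffWeyl a1 a2) :
    ∃ m u v, m ∈ matL ∧ (∃ c : ℤ, u - v = 3*c) ∧ AffData a1 a2 w.1 m u v := by
  have h1t : ⟪a1, a1 + a2⟫ = 1 := by rw [inner_add_right, hnorm1, hip]; norm_num
  have h2t : ⟪a2, a1 + a2⟫ = 1 := by
    rw [inner_add_right, real_inner_comm a1 a2, hip, hnorm2]
    norm_num
  have h21 : ⟪a2, a1⟫ = -1 := by rw [real_inner_comm]; exact hip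
  refine Subgroup.closure_induction ?_ ?_ ?_ ?_ w.2
  · -- generators
    rintro g ⟨α, hα, k, hfor⟩
    have key : ∀ (β : V) (k' : ℤ), (∀ v, g v = sRefl β k' v) → β ∈ PosRoots a1 a2 →
        ∃ m u v, m ∈ matL ∧ (∃ c : ℤ, u - v = 3*c) ∧ AffData a1 a2 g m u v := by
      rintro β k' hf (rfl | rfl | rfl)
      · refine ⟨(-1,0,1,1), 2*k', -k', by decide, ⟨k', by ring⟩, fun x => ?_⟩
        rw [hf x, inner_sRefl, inner_sRefl, hnorm1, h21]
        constructor <;> push_cast <;> ring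
      · refine ⟨(1,1,0,-1), -k', 2*k', by decide, ⟨-k', by ring⟩, fun x => ?_⟩
        rw [hf x, inner_sRefl, inner_sRefl, hip, hnorm2]
        constructor <;> push_cast <;> ring
      · refine ⟨(0,-1,-1,0), k', k', by decide, ⟨0, by ring⟩, fun x => ?_⟩
        rw [hf x, inner_sRefl, inner_sRefl, h1t, h2t, inner_add_left]
        constructor <;> push_cast <;> ring
    rcases hα with hpos | hneg
    · exact key α k hfor hpos
    · refine key (-α) (-k) (fun v => ?_) hneg
      rw [hfor v, ← sRefl_neg, neg_neg]
  · -- one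
    exact ⟨(1,0,0,1), 0, 0, by decide, ⟨0, by ring⟩, fun x => by
      constructor <;> push_cast <;> simp <;> ring⟩
  · -- mul
    rintro g h _ _ ⟨m, u, v, hm, ⟨e, he⟩, hd⟩ ⟨m', u', v', hm', ⟨e', he'⟩, hd'⟩
    obtain ⟨c, hc⟩ : ∃ c, m.1 - m.2.2.1 = 3*c + 1 := ⟨(m.1 - m.2.2.1)/3, by have := (matL_mod m hm).1; omega⟩
    obtain ⟨d, hdq⟩ : ∃ d, m.2.1 - m.2.2.2 = 3*d + 2 := ⟨(m.2.1 - m.2.2.2 - 2)/3, by have := (matL_mod m hm).2; omega⟩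
    refine ⟨mmul m m', m.1*u' + m.2.1*v' + u, m.2.2.1*u' + m.2.2.2*v' + v,
      matL_mul m hm m' hm', ⟨c*u' + d*v' + v' + e' + e, by linear_combination u'*hc + v'*hdq + he' + he⟩,
      fun x => ?_⟩
    have hx := hd' x
    have hgx := hd (h x)
    rw [hx.1, hx.2] at hgx
    simp only [Equiv.Perm.mul_apply, mmul]
    refine ⟨?_, ?_⟩
    · rw [hgx.1]; push_cast; ring
    · rw [hgx.2]; push_cast; ring
  · -- inv
    rintro g _ ⟨m, u, v, hm, ⟨e, he⟩, hd⟩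
    obtain ⟨m', hm', hmul1, hmul2⟩ := matL_inv m hm
    have q1 : m'.1 * m.1 + m'.2.1 * m.2.2.1 = 1 := congrArg (·.1) hmul2
    have q2 : m'.1 * m.2.1 + m'.2.1 * m.2.2.2 = 0 := congrArg (·.2.1) hmul2
    have q3 : m'.2.2.1 * m.1 + m'.2.2.2 * m.2.2.1 = 0 := congrArg (·.2.2.1) hmul2
    have q4 : m'.2.2.1 * m.2.1 + m'.2.2.2 * m.2.2.2 = 1 := congrArg (·.2.2.2) hmul2
    obtain ⟨c, hc⟩ : ∃ c, m'.1 - m'.2.2.1 = 3*c + 1 := ⟨(m'.1 - m'.2.2.1)/3, by have := (matL_mod m' hm').1; omega⟩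
    obtain ⟨d, hdq⟩ : ∃ d, m'.2.1 - m'.2.2.2 = 3*d + 2 := ⟨(m'.2.1 - m'.2.2.2 - 2)/3, by have := (matL_mod m' hm').2; omega⟩
    refine ⟨m', -(m'.1*u + m'.2.1*v), -(m'.2.2.1*u + m'.2.2.2*v), hm',
      ⟨-(c*u + d*v + v + e), by linear_combination (-u)*hc + (-v)*hdq - he⟩, fun x => ?_⟩
    have hx := hd (g⁻¹ x)
    rw [show g (g⁻¹ x) = x from Equiv.apply_symm_apply g x] at hx
    have E1 := hx.1
    have E2 := hx.2
    have r1 : (m'.1:ℝ)*m.1 + m'.2.1*m.2.2.1 = 1 := by exact_mod_cast congrArg (fun z : ℤ => (z:ℝ)) q1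
    have r2 : (m'.1:ℝ)*m.2.1 + m'.2.1*m.2.2.2 = 0 := by exact_mod_cast congrArg (fun z : ℤ => (z:ℝ)) q2
    have r3 : (m'.2.2.1:ℝ)*m.1 + m'.2.2.2*m.2.2.1 = 0 := by exact_mod_cast congrArg (fun z : ℤ => (z:ℝ)) q3
    have r4 : (m'.2.2.1:ℝ)*m.2.1 + m'.2.2.2*m.2.2.2 = 1 := by exact_mod_cast congrArg (fun z : ℤ => (z:ℝ)) q4
    constructor
    · push_cast
      linear_combination (-(m'.1:ℝ))*E1 - (m'.2.1:ℝ)*E2 - ⟪a1, g⁻¹ x⟫ * r1 - ⟪a2, g⁻¹ x⟫ * r2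
    · push_cast
      linear_combination (-(m'.2.2.1:ℝ))*E1 - (m'.2.2.2:ℝ)*E2 - ⟪a1, g⁻¹ x⟫ * r3 - ⟪a2, g⁻¹ x⟫ * r4


def Nw (a1 a2 q : V) (w : AffWeyl a1 a2) : ℕ :=
  ⌊⟪a1, act w q⟫⌋.natAbs + ⌊⟪a2, act w q⟫⌋.natAbs + ⌊⟪a1, act w q⟫ + ⟪a2, act w q⟫⌋.natAbs

theorem floor_of (x : ℝ) (m : ℤ) (f : ℝ) (hx : x = m + f) (h0 : 0 < f) (h1 : f < 1) :
    ⌊x⌋ = m := by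
  rw [hx, Int.floor_eq_iff]
  constructor
  · linarith
  · push_cast; linarith

section Main

variable {a1 a2 q : V}
  (hnorm1 : ⟪a1, a1⟫ = 2) (hnorm2 : ⟪a2, a2⟫ = 2) (hip : ⟪a1, a2⟫ = -1)
  (hq1 : ⟪a1, q⟫ = 1/3) (hq2 : ⟪a2, q⟫ = 1/3)

include hnorm1 hnorm2 hip in
theorem frac_struct (hq1 : ⟪a1, q⟫ = 1/3) (hq2 : ⟪a2, q⟫ = 1/3) (w : AffWeyl a1 a2) :
    ∃ m1 m2 e : ℤ, (e = 0 ∨ e = 1) ∧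
      ⟪a1, act w q⟫ = m1 + (1+e)/3 ∧ ⟪a2, act w q⟫ = m2 + (1+e)/3 := by
  obtain ⟨m, u, v, hm, -, hd⟩ := aff_struct a1 a2 hnorm1 hnorm2 hip w
  have hq := hd q
  rw [hq1, hq2] at hq
  have h1 : ⟪a1, act w q⟫ = (m.1:ℝ) * (1/3) + (m.2.1:ℝ) * (1/3) + u := hq.1
  have h2 : ⟪a2, act w q⟫ = (m.2.2.1:ℝ) * (1/3) + (m.2.2.2:ℝ) * (1/3) + v := hq.2
  clear hq
  simp only [matL, List.mem_cons, List.not_mem_nil, or_false] at hm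
  rcases hm with h|h|h|h|h|h <;> subst h <;> simp only [] at h1 h2
  · exact ⟨u, v, 0, Or.inl rfl, by push_cast at h1 ⊢; linarith, by push_cast at h2 ⊢; linarith⟩
  · exact ⟨u-1, v, 1, Or.inr rfl, by push_cast at h1 ⊢; linarith, by push_cast at h2 ⊢; linarith⟩
  · exact ⟨u, v-1, 1, Or.inr rfl, by push_cast at h1 ⊢; linarith, by push_cast at h2 ⊢; linarith⟩
  · exact ⟨u-1, v, 0, Or.inl rfl, by push_cast at h1 ⊢; linarith, by push_cast at h2 ⊢; linarith⟩
  · exact ⟨u, v-1, 0, Or.inl rfl, by push_cast at h1 ⊢; linarith, by push_cast at h2 ⊢; linarith⟩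
  · exact ⟨u-1, v-1, 1, Or.inr rfl, by push_cast at h1 ⊢; linarith, by push_cast at h2 ⊢; linarith⟩

include hnorm1 hnorm2 hip in
theorem step_vals (s w : AffWeyl a1 a2) (hs : IsSimpleRefl a1 a2 s.1) :
    (⟪a1, act (s*w) q⟫ = -⟪a1, act w q⟫ ∧
      ⟪a2, act (s*w) q⟫ = ⟪a1, act w q⟫ + ⟪a2, act w q⟫) ∨
    (⟪a1, act (s*w) q⟫ = ⟪a1, act w q⟫ + ⟪a2, act w q⟫ ∧
      ⟪a2, act (s*w) q⟫ = -⟪a2, act w q⟫) ∨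
    (⟪a1, act (s*w) q⟫ = 1 - ⟪a2, act w q⟫ ∧ ⟪a2, act (s*w) q⟫ = 1 - ⟪a1, act w q⟫) := by
  have h1t : ⟪a1, a1 + a2⟫ = 1 := by rw [inner_add_right, hnorm1, hip]; norm_num
  have h2t : ⟪a2, a1 + a2⟫ = 1 := by
    rw [inner_add_right, real_inner_comm a1 a2, hip, hnorm2]; norm_num
  have h21 : ⟪a2, a1⟫ = -1 := by rw [real_inner_comm]; exact hip
  have hact : act (s*w) q = s.1 (act w q) := rfl
  set z := act w q
  rcases hs with hs | hs | hs
  · left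
    rw [hact, hs z, inner_sRefl, inner_sRefl, hnorm1, h21]
    constructor <;> push_cast <;> ring
  · right; left
    rw [hact, hs z, inner_sRefl, inner_sRefl, hip, hnorm2]
    constructor <;> push_cast <;> ring
  · right; right
    rw [hact, hs z, inner_sRefl, inner_sRefl, h1t, h2t, inner_add_left]
    constructor <;> push_cast <;> ring

include hnorm1 hnorm2 hip hq1 hq2 in
theorem Nw_val (w : AffWeyl a1 a2) (m1 m2 e : ℤ) (he : e = 0 ∨ e = 1)
    (h1 : ⟪a1, act w q⟫ = m1 + (1+e)/3) (h2 : ⟪a2, act w q⟫ = m2 + (1+e)/3) :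
    Nw a1 a2 q w = m1.natAbs + m2.natAbs + (m1+m2+e).natAbs := by
  have hf0 : (0:ℝ) < (1+e)/3 := by rcases he with rfl | rfl <;> norm_num
  have hf1 : ((1+e):ℝ)/3 < 1 := by rcases he with rfl | rfl <;> norm_num
  unfold Nw
  rw [floor_of _ m1 _ h1 hf0 hf1, floor_of _ m2 _ h2 hf0 hf1,
    floor_of _ (m1+m2+e) (1 - (1+e)/3) (by push_cast; linarith) (by linarith) (by linarith)]

include hnorm1 hnorm2 hip hq1 hq2 in
theorem N_le_length : ∀ l : List (AffWeyl a1 a2),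
    (∀ g ∈ l, IsSimpleRefl a1 a2 (g : Equiv.Perm V)) → Nw a1 a2 q l.prod ≤ l.length := by
  intro l
  induction l with
  | nil =>
    intro _
    have hact : act (1 : AffWeyl a1 a2) q = q := rfl
    simp only [List.prod_nil, List.length_nil]
    rw [Nw_val hnorm1 hnorm2 hip hq1 hq2 1 0 0 0 (Or.inl rfl) (by rw [hact, hq1]; push_cast; ring)
      (by rw [hact, hq2]; push_cast; ring)]
    simp
  | cons s l ih =>
    intro hl
    have hs := hl s List.mem_cons_self
    have hrest : ∀ g ∈ l, IsSimpleRefl a1 a2 (g : Equiv.Perm V) :=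
      fun g hg => hl g (List.mem_cons_of_mem s hg)
    obtain ⟨m1, m2, e, he, h1, h2⟩ := frac_struct hnorm1 hnorm2 hip hq1 hq2 l.prod
    have hNw := Nw_val hnorm1 hnorm2 hip hq1 hq2 l.prod m1 m2 e he h1 h2
    have hlen := ih hrest
    rw [List.prod_cons, List.length_cons]
    have hf0 : (0:ℝ) < (1+e)/3 := by rcases he with rfl | rfl <;> norm_num
    have hf1 : ((1+e):ℝ)/3 < 1 := by rcases he with rfl | rfl <;> norm_num
    rcases step_vals hnorm1 hnorm2 hip (q := q) s l.prod hs with ⟨e1, e2⟩ | ⟨e1, e2⟩ | ⟨e1, e2⟩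
    · rw [Nw_val hnorm1 hnorm2 hip hq1 hq2 _ (-m1-1) (m1+m2+e) (1-e) (by omega)
        (by rw [e1, h1]; push_cast; ring) (by rw [e2, h1, h2]; push_cast; ring)]
      omega
    · rw [Nw_val hnorm1 hnorm2 hip hq1 hq2 _ (m1+m2+e) (-m2-1) (1-e) (by omega)
        (by rw [e1, h1, h2]; push_cast; ring) (by rw [e2, h2]; push_cast; ring)]
      omega
    · rw [Nw_val hnorm1 hnorm2 hip hq1 hq2 _ (-m2) (-m1) (1-e) (by omega)
        (by rw [e1, h2]; push_cast; ring) (by rw [e2, h1]; push_cast; ring)]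
      omega

include hnorm1 hnorm2 hip hq1 hq2 in
theorem eq_one_of_vals (w : AffWeyl a1 a2)
    (h1 : ⟪a1, act w q⟫ = 1/3) (h2 : ⟪a2, act w q⟫ = 1/3) : w = 1 := by
  obtain ⟨m, u, v, hm, ⟨c, hc⟩, hd⟩ := aff_struct a1 a2 hnorm1 hnorm2 hip w
  have hq := hd q
  rw [hq1, hq2] at hq
  have hk1 : (1:ℝ)/3 = (m.1:ℝ) * (1/3) + (m.2.1:ℝ) * (1/3) + u := h1 ▸ hq.1
  have hk2 : (1:ℝ)/3 = (m.2.2.1:ℝ) * (1/3) + (m.2.2.2:ℝ) * (1/3) + v := h2 ▸ hq.2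
  simp only [matL, List.mem_cons, List.not_mem_nil, or_false] at hm
  rcases hm with h|h|h|h|h|h <;> subst h <;> simp only [] at hk1 hk2
  · -- identity matrix
    have hu : (u:ℝ) = 0 := by push_cast at hk1; linarith
    have hv : (v:ℝ) = 0 := by push_cast at hk2; linarith
    have hu' : u = 0 := by exact_mod_cast hu
    have hv' : v = 0 := by exact_mod_cast hv
    subst hu' hv'
    have : w.1 = 1 := by
      apply Equiv.ext
      intro x
      simp only [Equiv.Perm.one_apply]
      have hx := hd x
      simp only [] at hx
      apply inj_aux a1 a2 hnorm1 hnorm2 hip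
      · rw [hx.1]; push_cast; ring
      · rw [hx.2]; push_cast; ring
    exact Subtype.ext this
  · exfalso
    have h3 : ((3*u : ℤ) : ℝ) = 2 := by push_cast at hk1 ⊢; linarith
    have h4 : (3*u : ℤ) = 2 := by exact_mod_cast h3
    omega
  · exfalso
    have h3 : ((3*v : ℤ) : ℝ) = 2 := by push_cast at hk2 ⊢; linarith
    have h4 : (3*v : ℤ) = 2 := by exact_mod_cast h3
    omega
  · exfalso
    have h3 : ((u : ℤ) : ℝ) = 1 := by push_cast at hk1 ⊢; linarith
    have h4 : ((v : ℤ) : ℝ) = 0 := by push_cast at hk2 ⊢; linarith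
    have h5 : (u : ℤ) = 1 := by exact_mod_cast h3
    have h6 : (v : ℤ) = 0 := by exact_mod_cast h4
    omega
  · exfalso
    have h3 : ((u : ℤ) : ℝ) = 0 := by push_cast at hk1 ⊢; linarith
    have h4 : ((v : ℤ) : ℝ) = 1 := by push_cast at hk2 ⊢; linarith
    have h5 : (u : ℤ) = 0 := by exact_mod_cast h3
    have h6 : (v : ℤ) = 1 := by exact_mod_cast h4
    omega
  · exfalso
    have h3 : ((3*u : ℤ) : ℝ) = 2 := by push_cast at hk1 ⊢; linarith
    have h4 : (3*u : ℤ) = 2 := by exact_mod_cast h3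
    omega

end Main

theorem sRefl_invol (α : V) (k : ℤ) (h2 : ⟪α,α⟫ = 2) : Function.Involutive (sRefl α k) := by
  intro v
  show sRefl α k (sRefl α k v) = v
  simp only [sRefl, inner_sub_right, real_inner_smul_right, h2]
  rw [sub_sub, ← add_smul]
  rw [show (⟪α, v⟫ - (k:ℝ)) + (⟪α,v⟫ - (⟪α,v⟫ - (k:ℝ))*2 - (k:ℝ)) = 0 from by ring,
    zero_smul, sub_zero]

def reflPerm (α : V) (k : ℤ) (h2 : ⟪α,α⟫ = 2) : Equiv.Perm V :=
  (sRefl_invol α k h2).toPerm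

theorem reflPerm_apply (α : V) (k : ℤ) (h2 : ⟪α,α⟫ = 2) (v : V) :
    reflPerm α k h2 v = sRefl α k v := rfl

theorem reflPerm_mem (a1 a2 α : V) (k : ℤ) (h2 : ⟪α,α⟫ = 2) (hα : α ∈ Phi a1 a2) :
    reflPerm α k h2 ∈ AffWeyl a1 a2 :=
  Subgroup.subset_closure ⟨α, hα, k, fun _ => rfl⟩

section Main2

variable {a1 a2 q : V}
  (hnorm1 : ⟪a1, a1⟫ = 2) (hnorm2 : ⟪a2, a2⟫ = 2) (hip : ⟪a1, a2⟫ = -1)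
  (hq1 : ⟪a1, q⟫ = 1/3) (hq2 : ⟪a2, q⟫ = 1/3)

include hnorm1 hnorm2 hip in
theorem norm_tilde : ⟪a1+a2, a1+a2⟫ = 2 := by
  rw [inner_add_right, inner_add_left, inner_add_left, real_inner_comm a1 a2, hip,
    hnorm1, hnorm2]
  norm_num

include hnorm1 hnorm2 hip in
theorem simples_exist :
    ∃ s1' s2' s0' : AffWeyl a1 a2,
      (∀ v, s1'.1 v = sRefl a1 0 v) ∧ (∀ v, s2'.1 v = sRefl a2 0 v) ∧
      (∀ v, s0'.1 v = sRefl (a1+a2) 1 v) ∧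
      s1' * s1' = 1 ∧ s2' * s2' = 1 ∧ s0' * s0' = 1 := by
  have ht := norm_tilde hnorm1 hnorm2 hip
  refine ⟨⟨reflPerm a1 0 hnorm1, reflPerm_mem a1 a2 a1 0 hnorm1 (Or.inl (by left; rfl))⟩,
    ⟨reflPerm a2 0 hnorm2, reflPerm_mem a1 a2 a2 0 hnorm2 (Or.inl (by right; left; rfl))⟩,
    ⟨reflPerm (a1+a2) 1 ht, reflPerm_mem a1 a2 (a1+a2) 1 ht (Or.inl (by right; right; rfl))⟩,
    fun v => rfl, fun v => rfl, fun v => rfl, ?_, ?_, ?_⟩ <;>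
  · apply Subtype.ext
    apply Equiv.ext
    intro v
    simp only [Subgroup.coe_mul, Equiv.Perm.mul_apply, OneMemClass.coe_one, Equiv.Perm.one_apply,
      reflPerm_apply]
    first
    | exact sRefl_invol a1 0 hnorm1 v
    | exact sRefl_invol a2 0 hnorm2 v
    | exact sRefl_invol (a1+a2) 1 ht v

include hnorm1 hnorm2 hip in
theorem s1_vals (s1' : AffWeyl a1 a2) (ha1 : ∀ v, s1'.1 v = sRefl a1 0 v) (w : AffWeyl a1 a2) :
    ⟪a1, act (s1'*w) q⟫ = -⟪a1, act w q⟫ ∧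
      ⟪a2, act (s1'*w) q⟫ = ⟪a1, act w q⟫ + ⟪a2, act w q⟫ := by
  have h21 : ⟪a2, a1⟫ = -1 := by rw [real_inner_comm]; exact hip
  have hact : act (s1'*w) q = s1'.1 (act w q) := rfl
  rw [hact, ha1 (act w q), inner_sRefl, inner_sRefl, hnorm1, h21]
  constructor <;> push_cast <;> ring

include hnorm1 hnorm2 hip in
theorem s2_vals (s2' : AffWeyl a1 a2) (ha2 : ∀ v, s2'.1 v = sRefl a2 0 v) (w : AffWeyl a1 a2) :
    ⟪a1, act (s2'*w) q⟫ = ⟪a1, act w q⟫ + ⟪a2, act w q⟫ ∧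
      ⟪a2, act (s2'*w) q⟫ = -⟪a2, act w q⟫ := by
  have hact : act (s2'*w) q = s2'.1 (act w q) := rfl
  rw [hact, ha2 (act w q), inner_sRefl, inner_sRefl, hip, hnorm2]
  constructor <;> push_cast <;> ring

include hnorm1 hnorm2 hip in
theorem s0_vals (s0' : AffWeyl a1 a2) (ha0 : ∀ v, s0'.1 v = sRefl (a1+a2) 1 v) (w : AffWeyl a1 a2) :
    ⟪a1, act (s0'*w) q⟫ = 1 - ⟪a2, act w q⟫ ∧
      ⟪a2, act (s0'*w) q⟫ = 1 - ⟪a1, act w q⟫ := by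
  have h1t : ⟪a1, a1 + a2⟫ = 1 := by rw [inner_add_right, hnorm1, hip]; norm_num
  have h2t : ⟪a2, a1 + a2⟫ = 1 := by
    rw [inner_add_right, real_inner_comm a1 a2, hip, hnorm2]; norm_num
  have hact : act (s0'*w) q = s0'.1 (act w q) := rfl
  rw [hact, ha0 (act w q), inner_sRefl, inner_sRefl, h1t, h2t, inner_add_left]
  constructor <;> push_cast <;> ring

include hnorm1 hnorm2 hip hq1 hq2 in
theorem exists_word : ∀ n, ∀ w : AffWeyl a1 a2, Nw a1 a2 q w = n →
    ∃ l : List (AffWeyl a1 a2), (∀ g ∈ l, IsSimpleRefl a1 a2 (g : Equiv.Perm V)) ∧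
      l.length = n ∧ l.prod = w := by
  intro n
  induction n using Nat.strong_induction_on with
  | _ n ih =>
  intro w hw
  obtain ⟨m1, m2, e, he, h1, h2⟩ := frac_struct hnorm1 hnorm2 hip hq1 hq2 w
  have hNw := Nw_val hnorm1 hnorm2 hip hq1 hq2 w m1 m2 e he h1 h2
  obtain ⟨s1', s2', s0', ha1, ha2, ha0, hsq1, hsq2, hsq0⟩ := simples_exist hnorm1 hnorm2 hip
  by_cases c1 : m1 ≤ -1
  · obtain ⟨e1, e2⟩ := s1_vals hnorm1 hnorm2 hip (q := q) s1' ha1 w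
    have hN' := Nw_val hnorm1 hnorm2 hip hq1 hq2 (s1'*w) (-m1-1) (m1+m2+e) (1-e) (by omega)
      (by rw [e1, h1]; push_cast; ring) (by rw [e2, h1, h2]; push_cast; ring)
    have hNn : Nw a1 a2 q (s1'*w) = n - 1 ∧ 1 ≤ n := by
      constructor
      · rw [hN', ← hw, hNw]; omega
      · rw [← hw, hNw]; omega
    obtain ⟨l, hl, hlen, hprod⟩ := ih (n-1) (by omega) (s1'*w) hNn.1
    refine ⟨s1' :: l, ?_, ?_, ?_⟩
    · intro g hg
      rcases List.mem_cons.mp hg with rfl | hg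
      · exact Or.inl ha1
      · exact hl g hg
    · rw [List.length_cons, hlen]; omega
    · rw [List.prod_cons, hprod, ← mul_assoc, hsq1, one_mul]
  by_cases c2 : m2 ≤ -1
  · obtain ⟨e1, e2⟩ := s2_vals hnorm1 hnorm2 hip (q := q) s2' ha2 w
    have hN' := Nw_val hnorm1 hnorm2 hip hq1 hq2 (s2'*w) (m1+m2+e) (-m2-1) (1-e) (by omega)
      (by rw [e1, h1, h2]; push_cast; ring) (by rw [e2, h2]; push_cast; ring)
    have hNn : Nw a1 a2 q (s2'*w) = n - 1 ∧ 1 ≤ n := by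
      constructor
      · rw [hN', ← hw, hNw]; omega
      · rw [← hw, hNw]; omega
    obtain ⟨l, hl, hlen, hprod⟩ := ih (n-1) (by omega) (s2'*w) hNn.1
    refine ⟨s2' :: l, ?_, ?_, ?_⟩
    · intro g hg
      rcases List.mem_cons.mp hg with rfl | hg
      · exact Or.inr (Or.inl ha2)
      · exact hl g hg
    · rw [List.length_cons, hlen]; omega
    · rw [List.prod_cons, hprod, ← mul_assoc, hsq2, one_mul]
  by_cases c3 : 1 ≤ m1+m2+e
  · obtain ⟨e1, e2⟩ := s0_vals hnorm1 hnorm2 hip (q := q) s0' ha0 w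
    have hN' := Nw_val hnorm1 hnorm2 hip hq1 hq2 (s0'*w) (-m2) (-m1) (1-e) (by omega)
      (by rw [e1, h2]; push_cast; ring) (by rw [e2, h1]; push_cast; ring)
    have hNn : Nw a1 a2 q (s0'*w) = n - 1 ∧ 1 ≤ n := by
      constructor
      · rw [hN', ← hw, hNw]; omega
      · rw [← hw, hNw]; omega
    obtain ⟨l, hl, hlen, hprod⟩ := ih (n-1) (by omega) (s0'*w) hNn.1
    refine ⟨s0' :: l, ?_, ?_, ?_⟩
    · intro g hg
      rcases List.mem_cons.mp hg with rfl | hg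
      · exact Or.inr (Or.inr ha0)
      · exact hl g hg
    · rw [List.length_cons, hlen]; omega
    · rw [List.prod_cons, hprod, ← mul_assoc, hsq0, one_mul]
  · have hz : m1 = 0 ∧ m2 = 0 ∧ e = 0 := by omega
    obtain ⟨rfl, rfl, rfl⟩ := hz
    have hw1 : w = 1 := by
      apply eq_one_of_vals hnorm1 hnorm2 hip hq1 hq2
      · rw [h1]; norm_num
      · rw [h2]; norm_num
    refine ⟨[], by simp, ?_, ?_⟩
    · simp only [List.length_nil]; omega
    · rw [List.prod_nil, hw1]

include hnorm1 hnorm2 hip hq1 hq2 in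
theorem len_eq (w : AffWeyl a1 a2) : len a1 a2 w = Nw a1 a2 q w := by
  obtain ⟨l, hl, hlen, hprod⟩ := exists_word hnorm1 hnorm2 hip hq1 hq2 (Nw a1 a2 q w) w rfl
  apply le_antisymm
  · exact Nat.sInf_le ⟨l, hl, hlen, hprod⟩
  · have hne : {n | ∃ l : List (AffWeyl a1 a2),
        (∀ g ∈ l, IsSimpleRefl a1 a2 (g : Equiv.Perm V)) ∧ l.length = n ∧ l.prod = w}.Nonempty :=
      ⟨Nw a1 a2 q w, l, hl, hlen, hprod⟩
    apply le_csInf hne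
    rintro n ⟨l', hl', hlen', hprod'⟩
    calc Nw a1 a2 q w = Nw a1 a2 q l'.prod := by rw [hprod']
    _ ≤ l'.length := N_le_length hnorm1 hnorm2 hip hq1 hq2 l' hl'
    _ = n := hlen'

end Main2


section Geom

variable {a1 a2 q : V}
  (hnorm1 : ⟪a1, a1⟫ = 2) (hnorm2 : ⟪a2, a2⟫ = 2) (hip : ⟪a1, a2⟫ = -1)
  (hq1 : ⟪a1, q⟫ = 1/3) (hq2 : ⟪a2, q⟫ = 1/3)

include hnorm1 hnorm2 hip in
theorem act_affine (w : AffWeyl a1 a2) (x y : V) (t : ℝ) :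
    act w (x + t • (y - x)) = act w x + t • (act w y - act w x) := by
  obtain ⟨m, u, v, -, -, hd⟩ := aff_struct a1 a2 hnorm1 hnorm2 hip w
  apply inj_aux a1 a2 hnorm1 hnorm2 hip
  · have e1 := (hd (x + t • (y - x))).1
    have e2 := (hd x).1
    have e3 := (hd y).1
    rw [show act w (x + t • (y - x)) = w.1 (x + t • (y - x)) from rfl, e1]
    rw [inner_add_right, inner_add_right, real_inner_smul_right, real_inner_smul_right,
      inner_sub_right, inner_sub_right, inner_add_right, real_inner_smul_right,
      inner_sub_right]
    rw [show act w x = w.1 x from rfl, show act w y = w.1 y from rfl, e2, e3]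
    ring
  · have e1 := (hd (x + t • (y - x))).2
    have e2 := (hd x).2
    have e3 := (hd y).2
    rw [show act w (x + t • (y - x)) = w.1 (x + t • (y - x)) from rfl, e1]
    rw [inner_add_right, inner_add_right, real_inner_smul_right, real_inner_smul_right,
      inner_sub_right, inner_sub_right, inner_add_right, real_inner_smul_right,
      inner_sub_right]
    rw [show act w x = w.1 x from rfl, show act w y = w.1 y from rfl, e2, e3]
    ring

include hnorm1 hnorm2 hip in
theorem act_continuous (w : AffWeyl a1 a2) : Continuous (act w) := by
  obtain ⟨m, u, v, -, -, hd⟩ := aff_struct a1 a2 hnorm1 hnorm2 hip w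
  have hfun : act w = fun x =>
      ((2*((m.1:ℝ) * ⟪a1,x⟫ + m.2.1 * ⟪a2,x⟫ + u) + ((m.2.2.1:ℝ) * ⟪a1,x⟫ + m.2.2.2 * ⟪a2,x⟫ + v))/3) • a1
      + ((((m.1:ℝ) * ⟪a1,x⟫ + m.2.1 * ⟪a2,x⟫ + u) + 2*((m.2.2.1:ℝ) * ⟪a1,x⟫ + m.2.2.2 * ⟪a2,x⟫ + v))/3) • a2 := by
    funext x
    have h := repr_aux a1 a2 hnorm1 hnorm2 hip (act w x)
    rw [show (⟪a1, act w x⟫) = ((m.1:ℝ) * ⟪a1,x⟫ + m.2.1 * ⟪a2,x⟫ + u) from (hd x).1,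
      show (⟪a2, act w x⟫) = ((m.2.2.1:ℝ) * ⟪a1,x⟫ + m.2.2.2 * ⟪a2,x⟫ + v) from (hd x).2] at h
    exact h
  rw [hfun]
  have hc1 : Continuous (fun x : V => ⟪a1, x⟫) := continuous_const.inner continuous_id
  have hc2 : Continuous (fun x : V => ⟪a2, x⟫) := continuous_const.inner continuous_id
  fun_prop

include hnorm1 hnorm2 hip hq1 hq2 in
theorem seg_mem_closure (w : AffWeyl a1 a2) (z : V)
    (hz : ∀ t : ℝ, 0 < t → t ≤ 1 → z + t • (q - z) ∈ A0 a1 a2) :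
    act w z ∈ closure (act w '' A0 a1 a2) := by
  have htend : Filter.Tendsto (fun n : ℕ => act w z + (1/(n+1) : ℝ) • (act w q - act w z))
      Filter.atTop (nhds (act w z)) := by
    have h0 : Filter.Tendsto (fun n : ℕ => (1/(n+1) : ℝ)) Filter.atTop (nhds 0) :=
      tendsto_one_div_add_atTop_nhds_zero_nat
    have := Filter.Tendsto.smul_const h0 (act w q - act w z)
    rw [zero_smul] at this
    simpa using Filter.Tendsto.const_add (act w z) this
  apply mem_closure_of_tendsto htend
  filter_upwards with n
  have hn0 : (0:ℝ) < 1/(n+1) := by positivity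
  have hn1 : (1:ℝ)/(n+1) ≤ 1 := by
    rw [div_le_one (by positivity)]
    norm_num
  refine ⟨z + (1/(n+1) : ℝ) • (q - z), hz _ hn0 hn1, ?_⟩
  rw [act_affine hnorm1 hnorm2 hip]

def Abar (a1 a2 : V) : Set V := {x : V | 0 ≤ ⟪a1,x⟫ ∧ 0 ≤ ⟪a2,x⟫ ∧ ⟪a1,x⟫ + ⟪a2,x⟫ ≤ 1}

include hnorm1 hnorm2 hip in
theorem closure_sub_Abar (w : AffWeyl a1 a2) :
    closure (act w '' A0 a1 a2) ⊆ act w '' Abar a1 a2 := by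
  apply closure_minimal
  · apply Set.image_mono
    intro v hv
    obtain ⟨hv1, hv2, hv3⟩ := hv
    rw [inner_add_left] at hv3
    exact ⟨le_of_lt hv1, le_of_lt hv2, le_of_lt hv3⟩
  · have heq : act w '' Abar a1 a2 = (act w⁻¹) ⁻¹' (Abar a1 a2) := by
      ext z
      constructor
      · rintro ⟨y, hy, rfl⟩
        have : act w⁻¹ (act w y) = y := by
          show ((w⁻¹ : AffWeyl a1 a2) : Equiv.Perm V) (((w : AffWeyl a1 a2) : Equiv.Perm V) y) = y
          rw [show ((w⁻¹ : AffWeyl a1 a2) : Equiv.Perm V) = ((w : AffWeyl a1 a2) : Equiv.Perm V)⁻¹ from rfl]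
          exact Equiv.symm_apply_apply _ y
        rwa [Set.mem_preimage, this]
      · intro hz
        refine ⟨act w⁻¹ z, hz, ?_⟩
        show ((w : AffWeyl a1 a2) : Equiv.Perm V) (((w⁻¹ : AffWeyl a1 a2) : Equiv.Perm V) z) = z
        rw [show ((w⁻¹ : AffWeyl a1 a2) : Equiv.Perm V) = ((w : AffWeyl a1 a2) : Equiv.Perm V)⁻¹ from rfl]
        exact Equiv.apply_symm_apply _ z
    rw [heq]
    have hc1 : Continuous (fun x : V => ⟪a1, x⟫) := continuous_const.inner continuous_id
    have hc2 : Continuous (fun x : V => ⟪a2, x⟫) := continuous_const.inner continuous_id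
    have hclosed : IsClosed (Abar a1 a2) := by
      have : Abar a1 a2 = {x : V | 0 ≤ ⟪a1,x⟫} ∩ ({x : V | 0 ≤ ⟪a2,x⟫} ∩ {x : V | ⟪a1,x⟫ + ⟪a2,x⟫ ≤ 1}) := rfl
      rw [this]
      exact (isClosed_le continuous_const hc1).inter
        ((isClosed_le continuous_const hc2).inter (isClosed_le (hc1.add hc2) continuous_const))
    exact hclosed.preimage (act_continuous hnorm1 hnorm2 hip w⁻¹)

end Geom

section Geom2

variable {a1 a2 q : V}
  (hnorm1 : ⟪a1, a1⟫ = 2) (hnorm2 : ⟪a2, a2⟫ = 2) (hip : ⟪a1, a2⟫ = -1)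
  (hq1 : ⟪a1, q⟫ = 1/3) (hq2 : ⟪a2, q⟫ = 1/3)

/-- point with prescribed coordinates -/
def ptv (a1 a2 : V) (p r : ℝ) : V := ((2*p+r)/3) • a1 + ((p+2*r)/3) • a2

include hnorm1 hnorm2 hip in
theorem ptv_vals (p r : ℝ) : ⟪a1, ptv a1 a2 p r⟫ = p ∧ ⟪a2, ptv a1 a2 p r⟫ = r := by
  unfold ptv
  constructor
  · rw [inner_add_right, real_inner_smul_right, real_inner_smul_right, hnorm1, hip]; ring
  · rw [inner_add_right, real_inner_smul_right, real_inner_smul_right,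
      real_inner_comm a1 a2, hip, hnorm2]; ring

include hnorm1 hnorm2 hip hq1 hq2 in
theorem vertex_closure_mem (w : AffWeyl a1 a2) (z : V)
    (hz : (⟪a1,z⟫ = 0 ∧ ⟪a2,z⟫ = 0) ∨ (⟪a1,z⟫ = 1 ∧ ⟪a2,z⟫ = 0) ∨ (⟪a1,z⟫ = 0 ∧ ⟪a2,z⟫ = 1)) :
    act w z ∈ closure (act w '' A0 a1 a2) := by
  apply seg_mem_closure hnorm1 hnorm2 hip hq1 hq2
  intro t ht0 ht1
  have e1 : ⟪a1, z + t • (q - z)⟫ = (1-t) * ⟪a1,z⟫ + t * (1/3) := by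
    rw [inner_add_right, real_inner_smul_right, inner_sub_right, hq1]; ring
  have e2 : ⟪a2, z + t • (q - z)⟫ = (1-t) * ⟪a2,z⟫ + t * (1/3) := by
    rw [inner_add_right, real_inner_smul_right, inner_sub_right, hq2]; ring
  have e3 : ⟪a1 + a2, z + t • (q - z)⟫ = (1-t) * (⟪a1,z⟫ + ⟪a2,z⟫) + t * (2/3) := by
    rw [inner_add_left, e1, e2]; ring
  refine ⟨?_, ?_, ?_⟩
  · rw [e1]
    rcases hz with ⟨hz1, -⟩ | ⟨hz1, -⟩ | ⟨hz1, -⟩ <;> rw [hz1] <;> nlinarith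
  · rw [e2]
    rcases hz with ⟨-, hz2⟩ | ⟨-, hz2⟩ | ⟨-, hz2⟩ <;> rw [hz2] <;> nlinarith
  · rw [e3]
    rcases hz with ⟨hz1, hz2⟩ | ⟨hz1, hz2⟩ | ⟨hz1, hz2⟩ <;> rw [hz1, hz2] <;> nlinarith

include hnorm1 hnorm2 hip hq1 hq2 in
theorem vertex_subsingleton (w : AffWeyl a1 a2) (α : V) (k a b cc : ℤ)
    (hrow : ((a, b) : ℤ×ℤ) ∈ rowL)
    (hform : ∀ x : V, ⟪α, act w x⟫ = a * ⟪a1,x⟫ + b * ⟪a2,x⟫ + cc)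
    (hk3 : 3*k = a + b + 3*cc + 2) :
    (closure (act w '' A0 a1 a2) ∩ Hplane α k).Subsingleton := by
  intro z hz z' hz'
  obtain ⟨y, hy, rfl⟩ := closure_sub_Abar hnorm1 hnorm2 hip w hz.1
  obtain ⟨y', hy', rfl⟩ := closure_sub_Abar hnorm1 hnorm2 hip w hz'.1
  have hv : ⟪α, act w y⟫ = (k:ℝ) := hz.2
  have hv' : ⟪α, act w y'⟫ = (k:ℝ) := hz'.2
  rw [hform y] at hv
  rw [hform y'] at hv'
  obtain ⟨hy1, hy2, hy3⟩ := hy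
  obtain ⟨hy1', hy2', hy3'⟩ := hy'
  simp only [rowL, List.mem_cons, List.not_mem_nil, or_false, Prod.mk.injEq] at hrow
  have hinj : ⟪a1,y⟫ = ⟪a1,y'⟫ → ⟪a2,y⟫ = ⟪a2,y'⟫ → act w y = act w y' := by
    intro p1 p2
    rw [inj_aux a1 a2 hnorm1 hnorm2 hip y y' p1 p2]
  rcases hrow with ⟨rfl, rfl⟩ | ⟨rfl, rfl⟩ | ⟨rfl, rfl⟩ | ⟨rfl, rfl⟩ | ⟨rfl, rfl⟩ | ⟨rfl, rfl⟩
  · -- (1,0): k = cc+1, t1 = 1, t2 = 0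
    have hk' : k = cc + 1 := by omega
    subst hk'
    have e1 : ⟪a1,y⟫ = 1 := by push_cast at hv; linarith
    have e1' : ⟪a1,y'⟫ = 1 := by push_cast at hv'; linarith
    exact hinj (by rw [e1, e1']) (by linarith)
  · -- (0,1)
    have hk' : k = cc + 1 := by omega
    subst hk'
    have e2 : ⟪a2,y⟫ = 1 := by push_cast at hv; linarith
    have e2' : ⟪a2,y'⟫ = 1 := by push_cast at hv'; linarith
    exact hinj (by linarith) (by rw [e2, e2'])
  · omega
  · omega
  · omega
  · -- (-1,-1): k = cc, t1+t2 = 0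
    have hk' : k = cc := by omega
    subst hk'
    have e1 : ⟪a1,y⟫ + ⟪a2,y⟫ = 0 := by push_cast at hv; linarith
    have e1' : ⟪a1,y'⟫ + ⟪a2,y'⟫ = 0 := by push_cast at hv'; linarith
    exact hinj (by linarith) (by linarith)

include hnorm1 hnorm2 hip hq1 hq2 in
theorem edge_nontrivial (w : AffWeyl a1 a2) (α : V) (k a b cc : ℤ)
    (hrow : ((a, b) : ℤ×ℤ) ∈ rowL)
    (hform : ∀ x : V, ⟪α, act w x⟫ = a * ⟪a1,x⟫ + b * ⟪a2,x⟫ + cc)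
    (hk3 : 3*k = a + b + 3*cc + 1) :
    (closure (act w '' A0 a1 a2) ∩ Hplane α k).Nontrivial := by
  have hv0 : (⟪a1, (0:V)⟫ = 0 ∧ ⟪a2, (0:V)⟫ = 0) := by
    constructor <;> exact inner_zero_right _
  obtain ⟨h11, h12⟩ := ptv_vals hnorm1 hnorm2 hip (1:ℝ) 0
  obtain ⟨h21, h22⟩ := ptv_vals hnorm1 hnorm2 hip (0:ℝ) 1
  set v1 := ptv a1 a2 1 0
  set v2 := ptv a1 a2 0 1
  have hm0 := vertex_closure_mem hnorm1 hnorm2 hip hq1 hq2 w 0 (Or.inl hv0)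
  have hm1 := vertex_closure_mem hnorm1 hnorm2 hip hq1 hq2 w v1 (Or.inr (Or.inl ⟨h11, h12⟩))
  have hm2 := vertex_closure_mem hnorm1 hnorm2 hip hq1 hq2 w v2 (Or.inr (Or.inr ⟨h21, h22⟩))
  have hinj : Function.Injective (act w) := fun x y hxy => (w : Equiv.Perm V).injective hxy
  simp only [rowL, List.mem_cons, List.not_mem_nil, or_false, Prod.mk.injEq] at hrow
  rcases hrow with ⟨rfl, rfl⟩ | ⟨rfl, rfl⟩ | ⟨rfl, rfl⟩ | ⟨rfl, rfl⟩ | ⟨rfl, rfl⟩ | ⟨rfl, rfl⟩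
  · omega
  · omega
  · -- (1,1): k = cc+1: v1 and v2
    have hk' : k = cc + 1 := by omega
    subst hk'
    refine ⟨act w v1, ⟨hm1, ?_⟩, act w v2, ⟨hm2, ?_⟩, ?_⟩
    · show ⟪α, act w v1⟫ = _
      rw [hform v1, h11, h12]; push_cast; ring
    · show ⟪α, act w v2⟫ = _
      rw [hform v2, h21, h22]; push_cast; ring
    · intro hcon
      have := hinj hcon
      rw [this] at h11
      rw [h21] at h11
      norm_num at h11
  · -- (-1,0): k = cc: v0 and v2
    have hk' : k = cc := by omega
    subst hk'
    refine ⟨act w 0, ⟨hm0, ?_⟩, act w v2, ⟨hm2, ?_⟩, ?_⟩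
    · show ⟪α, act w 0⟫ = _
      rw [hform 0, hv0.1, hv0.2]; push_cast; ring
    · show ⟪α, act w v2⟫ = _
      rw [hform v2, h21, h22]; push_cast; ring
    · intro hcon
      have := hinj hcon
      rw [← this] at h22
      rw [hv0.2] at h22
      norm_num at h22
  · -- (0,-1): k = cc: v0 and v1
    have hk' : k = cc := by omega
    subst hk'
    refine ⟨act w 0, ⟨hm0, ?_⟩, act w v1, ⟨hm1, ?_⟩, ?_⟩
    · show ⟪α, act w 0⟫ = _
      rw [hform 0, hv0.1, hv0.2]; push_cast; ring
    · show ⟪α, act w v1⟫ = _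
      rw [hform v1, h11, h12]; push_cast; ring
    · intro hcon
      have := hinj hcon
      rw [← this] at h11
      rw [hv0.1] at h11
      norm_num at h11
  · omega

theorem convex_inner_gt (a : V) (c : ℝ) : Convex ℝ {v : V | c < ⟪a,v⟫} :=
  convex_halfSpace_gt ⟨fun x y => inner_add_right a x y, fun t x => real_inner_smul_right a x t⟩ c

theorem convex_inner_lt (a : V) (c : ℝ) : Convex ℝ {v : V | ⟪a,v⟫ < c} :=
  convex_halfSpace_lt ⟨fun x y => inner_add_right a x y, fun t x => real_inner_smul_right a x t⟩ c

theorem chamber_sub (w : AffWeyl a1 a2) (R : Set V) (hconv : Convex ℝ R)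
    (hsub : R ⊆ (StripUnion a1 a2)ᶜ) (hmem : (w : Equiv.Perm V) q ∈ R) :
    R ⊆ chamberOf a1 a2 q w :=
  hconv.isPreconnected.subset_connectedComponentIn hmem hsub

end Geom2



set_option maxHeartbeats 3200000 in
/-- **Lemma.** Let `w` be non-spiral, `α` the root pointing into the chamber of `w`, and
`k ∈ ℤ` with `k − 1 < (α,v) < k` for all `v ∈ w A₀`. Then `k ≥ 1`; if `cl(w A₀) ∩ H_{α,k}` is
an edge of the alcove (contains more than one point) then `ℓ(s_{α,k} w) = ℓ(w) + 1`, and if it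
is a single point (a vertex) then `ℓ(s_{α,k} w) = ℓ(w) + 3`. -/
theorem length_reflect_toward_chamber
    (a1 a2 q : V)
    (hnorm1 : ⟪a1, a1⟫ = 2) (hnorm2 : ⟪a2, a2⟫ = 2) (hip : ⟪a1, a2⟫ = -1)
    (hq1 : ⟪a1, q⟫ = 1/3) (hq2 : ⟪a2, q⟫ = 1/3)
    (w : AffWeyl a1 a2) (hns : ¬ IsSpiral a1 a2 q w)
    (α : V) (hα : PointsInto a1 a2 (chamberOf a1 a2 q w) α)
    (k : ℤ)
    (hk : ∀ v ∈ act w '' A0 a1 a2, (k : ℝ) - 1 < ⟪α, v⟫ ∧ ⟪α, v⟫ < (k : ℝ))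
    (r : AffWeyl a1 a2) (hr : ∀ v : V, act r v = sRefl α k v) :
    1 ≤ k ∧
    ((closure (act w '' A0 a1 a2) ∩ Hplane α k).Nontrivial →
      len a1 a2 (r * w) = len a1 a2 w + 1) ∧
    ((∃ p : V, closure (act w '' A0 a1 a2) ∩ Hplane α k = {p}) →
      len a1 a2 (r * w) = len a1 a2 w + 3) := by

  -- Gram matrix facts
  have h21 : ⟪a2, a1⟫ = -1 := by rw [real_inner_comm]; exact hip
  have g1t : ⟪a1, a1 + a2⟫ = 1 := by rw [inner_add_right, hnorm1, hip]; norm_num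
  have g2t : ⟪a2, a1 + a2⟫ = 1 := by rw [inner_add_right, h21, hnorm2]; norm_num
  have gt1 : ⟪a1 + a2, a1⟫ = 1 := by rw [inner_add_left, hnorm1, h21]; norm_num
  have gt2 : ⟪a1 + a2, a2⟫ = 1 := by rw [inner_add_left, hip, hnorm2]; norm_num
  have gtt : ⟪a1 + a2, a1 + a2⟫ = 2 := norm_tilde hnorm1 hnorm2 hip
  -- structure data
  obtain ⟨m, u, v, hm, hmod, hd⟩ := aff_struct a1 a2 hnorm1 hnorm2 hip w
  have hA1 : ∀ x : V, ⟪a1, act w x⟫ = (m.1:ℝ)*⟪a1,x⟫ + (m.2.1:ℝ)*⟪a2,x⟫ + (u:ℝ) :=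
    fun x => (hd x).1
  have hA2 : ∀ x : V, ⟪a2, act w x⟫ = (m.2.2.1:ℝ)*⟪a1,x⟫ + (m.2.2.2:ℝ)*⟪a2,x⟫ + (v:ℝ) :=
    fun x => (hd x).2
  obtain ⟨m1, m2, e, he, h1, h2⟩ := frac_struct hnorm1 hnorm2 hip hq1 hq2 w
  obtain ⟨hrow1, hrow2, hrow3⟩ := matL_rows m hm
  have hA1 : ∀ x : V, ⟪a1, act w x⟫ = (m.1:ℝ)*⟪a1,x⟫ + (m.2.1:ℝ)*⟪a2,x⟫ + (u:ℝ) :=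
    fun x => (hd x).1
  have hA2 : ∀ x : V, ⟪a2, act w x⟫ = (m.2.2.1:ℝ)*⟪a1,x⟫ + (m.2.2.2:ℝ)*⟪a2,x⟫ + (v:ℝ) :=
    fun x => (hd x).2
  have hNw := Nw_val hnorm1 hnorm2 hip hq1 hq2 w m1 m2 e he h1 h2
  -- links between the two data sets
  have hl1 : 3*m1 + 1 + e = m.1 + m.2.1 + 3*u := by
    have hh : ⟪a1, act w q⟫ = (m.1:ℝ) * (1/3) + (m.2.1:ℝ) * (1/3) + u := by
      have := (hd q).1
      rw [hq1, hq2] at this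
      exact this
    rw [h1] at hh
    have : ((3*m1 + 1 + e : ℤ) : ℝ) = ((m.1 + m.2.1 + 3*u : ℤ) : ℝ) := by push_cast; linarith
    exact_mod_cast this
  have hl2 : 3*m2 + 1 + e = m.2.2.1 + m.2.2.2 + 3*v := by
    have hh : ⟪a2, act w q⟫ = (m.2.2.1:ℝ) * (1/3) + (m.2.2.2:ℝ) * (1/3) + v := by
      have := (hd q).2
      rw [hq1, hq2] at this
      exact this
    rw [h2] at hh
    have : ((3*m2 + 1 + e : ℤ) : ℝ) = ((m.2.2.1 + m.2.2.2 + 3*v : ℤ) : ℝ) := by push_cast; linarith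
    exact_mod_cast this
  -- sign data from non-spiral
  have hT1 : ⟪a1, act w q⟫ < 0 ∨ 1 < ⟪a1, act w q⟫ := by
    by_contra hcon
    push_neg at hcon
    exact hns (Or.inl (Or.inl ⟨hcon.1, hcon.2⟩))
  have hT2 : ⟪a2, act w q⟫ < 0 ∨ 1 < ⟪a2, act w q⟫ := by
    by_contra hcon
    push_neg at hcon
    exact hns (Or.inl (Or.inr ⟨hcon.1, hcon.2⟩))
  have hT3 : ⟪a1, act w q⟫ + ⟪a2, act w q⟫ < 0 ∨ 1 < ⟪a1, act w q⟫ + ⟪a2, act w q⟫ := by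
    by_contra hcon
    push_neg at hcon
    refine hns (Or.inr ⟨?_, ?_⟩) <;> rw [inner_add_left] <;> [exact hcon.1; exact hcon.2]
  have keyM : ∀ (z : ℤ) (T f : ℝ), 0 < f → f < 1 → T = z + f → (T < 0 ∨ 1 < T) →
      (z ≤ -1 ∨ 1 ≤ z) := by
    intro z T f hf0 hf1 hT hor
    rcases hor with h | h
    · left
      have hz : (z:ℝ) < 0 := by linarith
      have : z < 0 := by exact_mod_cast hz
      omega
    · right
      have hz : (0:ℝ) < z := by linarith
      have : 0 < z := by exact_mod_cast hz
      omega
  have hf0 : (0:ℝ) < (1+(e:ℝ))/3 := by rcases he with rfl | rfl <;> norm_num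
  have hf1 : (1+(e:ℝ))/3 < 1 := by rcases he with rfl | rfl <;> norm_num
  have hM1 := keyM m1 _ _ hf0 hf1 h1 hT1
  have hM2 := keyM m2 _ _ hf0 hf1 h2 hT2
  have hM3 := keyM (m1+m2+e) _ (1 - (1+(e:ℝ))/3) (by linarith) (by linarith)
    (by rw [h1, h2]; push_cast; ring) hT3
  -- common tools
  have hElim : ∀ tp : V, tp ∈ chamberOf a1 a2 q w → tp + α ∈ StripUnion a1 a2 → False :=
    fun tp h hs => (connectedComponentIn_subset _ _ (hα.2 tp h)) hs
  have hptv1 : ∀ p rr : ℝ, ⟪a1, ptv a1 a2 p rr⟫ = p :=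
    fun p rr => (ptv_vals hnorm1 hnorm2 hip p rr).1
  have hptv2 : ∀ p rr : ℝ, ⟪a2, ptv a1 a2 p rr⟫ = rr :=
    fun p rr => (ptv_vals hnorm1 hnorm2 hip p rr).2
  have hptv3 : ∀ p rr : ℝ, ⟪a1+a2, ptv a1 a2 p rr⟫ = p + rr :=
    fun p rr => by rw [inner_add_left, hptv1, hptv2]
  have hq0 : q ∈ A0 a1 a2 := by
    refine ⟨by rw [hq1]; norm_num, by rw [hq2]; norm_num, ?_⟩
    rw [inner_add_left, hq1, hq2]; norm_num
  have hwq0 : act w q ∈ act w '' A0 a1 a2 := ⟨q, hq0, rfl⟩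
  have hwq := hk (act w q) hwq0
  have hphi := hα.1
  -- case on chambers
  rcases hM1 with c1 | c1 <;> rcases hM2 with c2 | c2 <;> rcases hM3 with c3 | c3
  · -- chamber F: m1 ≤ -1, m2 ≤ -1, m3 ≤ -1 : α = -(a1+a2)
    have cm1 : (m1:ℝ) ≤ -1 := by exact_mod_cast c1
    have cm2 : (m2:ℝ) ≤ -1 := by exact_mod_cast c2
    have cm3 : ((m1+m2+e:ℤ):ℝ) ≤ -1 := by exact_mod_cast c3
    have hR : {x : V | ⟪a1,x⟫ < 0 ∧ ⟪a2,x⟫ < 0 ∧ ⟪a1+a2,x⟫ < 0} ⊆ chamberOf a1 a2 q w := by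
      apply chamber_sub
      · exact (convex_inner_lt a1 0).inter ((convex_inner_lt a2 0).inter
          (convex_inner_lt (a1+a2) 0))
      · rintro x ⟨hx1, hx2, hx3⟩ ((h|h)|h)
        · exact absurd hx1 (not_lt.mpr h.1)
        · exact absurd hx2 (not_lt.mpr h.1)
        · exact absurd hx3 (not_lt.mpr h.1)
      · refine ⟨?_, ?_, ?_⟩
        · show ⟪a1, act w q⟫ < 0
          rw [h1]; rcases he with rfl | rfl <;> push_cast at cm1 ⊢ <;> linarith
        · show ⟪a2, act w q⟫ < 0
          rw [h2]; rcases he with rfl | rfl <;> push_cast at cm2 ⊢ <;> linarith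
        · show ⟪a1+a2, act w q⟫ < 0
          rw [inner_add_left, h1, h2]
          rcases he with rfl | rfl <;> push_cast at cm3 ⊢ <;> linarith
    rcases hphi with (hpos | hpos | hpos) | (hneg | hneg | hneg)
    · exfalso
      refine hElim (ptv a1 a2 (-1.5) (-1)) (hR ⟨by rw [hptv1]; norm_num, by rw [hptv2]; norm_num,
        by rw [hptv3]; norm_num⟩) ?_
      rw [hpos]
      refine Or.inl (Or.inl ⟨?_, ?_⟩) <;> rw [inner_add_right, hptv1, hnorm1] <;> norm_num
    · exfalso
      refine hElim (ptv a1 a2 (-1) (-1.5)) (hR ⟨by rw [hptv1]; norm_num, by rw [hptv2]; norm_num,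
        by rw [hptv3]; norm_num⟩) ?_
      rw [hpos]
      refine Or.inl (Or.inr ⟨?_, ?_⟩) <;> rw [inner_add_right, hptv2, hnorm2] <;> norm_num
    · exfalso
      refine hElim (ptv a1 a2 (-0.5) (-1)) (hR ⟨by rw [hptv1]; norm_num, by rw [hptv2]; norm_num,
        by rw [hptv3]; norm_num⟩) ?_
      rw [hpos]
      refine Or.inl (Or.inl ⟨?_, ?_⟩) <;> rw [inner_add_right, hptv1, g1t] <;> norm_num
    · have hα' : α = -a1 := by rw [← hneg, neg_neg]
      exfalso
      refine hElim (ptv a1 a2 (-1) (-0.5)) (hR ⟨by rw [hptv1]; norm_num, by rw [hptv2]; norm_num,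
        by rw [hptv3]; norm_num⟩) ?_
      rw [hα']
      refine Or.inl (Or.inr ⟨?_, ?_⟩) <;>
        rw [inner_add_right, hptv2, inner_neg_right, h21] <;> norm_num
    · have hα' : α = -a2 := by rw [← hneg, neg_neg]
      exfalso
      refine hElim (ptv a1 a2 (-0.5) (-1)) (hR ⟨by rw [hptv1]; norm_num, by rw [hptv2]; norm_num,
        by rw [hptv3]; norm_num⟩) ?_
      rw [hα']
      refine Or.inl (Or.inl ⟨?_, ?_⟩) <;>
        rw [inner_add_right, hptv1, inner_neg_right, hip] <;> norm_num
    · -- good case : α = -(a1+a2)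
      have hα' : α = -(a1+a2) := by rw [← hneg, neg_neg]
      rw [hα'] at hk hr hwq ⊢
      have hval : ⟪-(a1+a2), act w q⟫ = ((-(m1+m2+e)-1:ℤ):ℝ) + (1+(e:ℝ))/3 := by
        rw [inner_neg_left, inner_add_left, h1, h2]; push_cast; ring
      have hkeq : k = -(m1+m2+e) := by
        have hlow := hwq.1
        have hhigh := hwq.2
        rw [hval] at hlow hhigh
        have hk1 : (k:ℝ) < ((-(m1+m2+e)-1:ℤ):ℝ) + 2 := by
          rcases he with rfl|rfl <;> push_cast at hlow ⊢ <;> linarith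
        have hk2 : ((-(m1+m2+e)-1:ℤ):ℝ) < (k:ℝ) := by
          rcases he with rfl|rfl <;> push_cast at hhigh ⊢ <;> linarith
        have i1 : k < -(m1+m2+e)-1+2 := by exact_mod_cast hk1
        have i2 : -(m1+m2+e)-1 < k := by exact_mod_cast hk2
        omega
      have hact : act (r*w) q = sRefl (-(a1+a2)) k (act w q) := by
        rw [show act (r*w) q = act r (act w q) from rfl, hr]
      have hkr : (k:ℝ) = -((m1:ℝ)+(m2:ℝ)+(e:ℝ)) := by
        have : (k:ℝ) = ((-(m1+m2+e):ℤ):ℝ) := congrArg (fun z : ℤ => (z:ℝ)) hkeq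
        rw [this]; push_cast; ring
      have e1' : ⟪a1, act (r*w) q⟫ = ((m1+e-1 : ℤ):ℝ) + (1 + ((1-e:ℤ):ℝ))/3 := by
        rw [hact, sRefl_neg, inner_sRefl, g1t, inner_add_left, h1, h2]
        push_cast
        rw [hkr]; ring
      have e2' : ⟪a2, act (r*w) q⟫ = ((m2+e-1 : ℤ):ℝ) + (1 + ((1-e:ℤ):ℝ))/3 := by
        rw [hact, sRefl_neg, inner_sRefl, g2t, inner_add_left, h1, h2]
        push_cast
        rw [hkr]; ring
      have hformF : ∀ x : V, ⟪-(a1+a2), act w x⟫ =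
          ((-(m.1+m.2.2.1) : ℤ):ℝ) * ⟪a1,x⟫ + ((-(m.2.1+m.2.2.2) : ℤ):ℝ) * ⟪a2,x⟫
            + ((-(u+v):ℤ):ℝ) := by
        intro x
        rw [inner_neg_left, inner_add_left, hA1 x, hA2 x]; push_cast; ring
      have hrowF : ((-(m.1+m.2.2.1), -(m.2.1+m.2.2.2)) : ℤ×ℤ) ∈ rowL :=
        rowL_neg (m.1+m.2.2.1, m.2.1+m.2.2.2) hrow3
      have hNw' := Nw_val hnorm1 hnorm2 hip hq1 hq2 (r*w) (m1+e-1) (m2+e-1) (1-e)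
        (by omega) e1' e2'
      refine ⟨by omega, ?_, ?_⟩
      · intro hNT
        rcases he with rfl | rfl
        · exfalso
          obtain ⟨x, hx, y, hy, hxy⟩ := hNT
          exact hxy (vertex_subsingleton hnorm1 hnorm2 hip hq1 hq2 w (-(a1+a2)) k
            (-(m.1+m.2.2.1)) (-(m.2.1+m.2.2.2)) (-(u+v)) hrowF hformF (by omega) hx hy)
        · rw [len_eq hnorm1 hnorm2 hip hq1 hq2 (r*w), len_eq hnorm1 hnorm2 hip hq1 hq2 w,
            hNw', hNw]
          omega
      · intro hSing
        rcases he with rfl | rfl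
        · rw [len_eq hnorm1 hnorm2 hip hq1 hq2 (r*w), len_eq hnorm1 hnorm2 hip hq1 hq2 w,
            hNw', hNw]
          omega
        · exfalso
          obtain ⟨p, hp⟩ := hSing
          obtain ⟨x, hx, y, hy, hxy⟩ := edge_nontrivial hnorm1 hnorm2 hip hq1 hq2 w (-(a1+a2)) k
            (-(m.1+m.2.2.1)) (-(m.2.1+m.2.2.2)) (-(u+v)) hrowF hformF (by omega)
          rw [hp] at hx hy
          exact hxy (hx.trans hy.symm)
  · -- m1 ≤ -1, m2 ≤ -1, m3 ≥ 1: impossible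
    exfalso; omega
  · -- chamber E: m1 ≤ -1, m2 ≥ 1, m3 ≤ -1 : α = -a1
    have cm1 : (m1:ℝ) ≤ -1 := by exact_mod_cast c1
    have cm2 : (1:ℝ) ≤ (m2:ℝ) := by exact_mod_cast c2
    have cm3 : ((m1+m2+e:ℤ):ℝ) ≤ -1 := by exact_mod_cast c3
    have hR : {x : V | ⟪a1,x⟫ < 0 ∧ 1 < ⟪a2,x⟫ ∧ ⟪a1+a2,x⟫ < 0} ⊆ chamberOf a1 a2 q w := by
      apply chamber_sub
      · exact (convex_inner_lt a1 0).inter ((convex_inner_gt a2 1).inter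
          (convex_inner_lt (a1+a2) 0))
      · rintro x ⟨hx1, hx2, hx3⟩ ((h|h)|h)
        · exact absurd hx1 (not_lt.mpr h.1)
        · exact absurd hx2 (not_lt.mpr h.2)
        · exact absurd hx3 (not_lt.mpr h.1)
      · refine ⟨?_, ?_, ?_⟩
        · show ⟪a1, act w q⟫ < 0
          rw [h1]; rcases he with rfl | rfl <;> push_cast at cm1 ⊢ <;> linarith
        · show (1:ℝ) < ⟪a2, act w q⟫
          rw [h2]; rcases he with rfl | rfl <;> push_cast at cm2 ⊢ <;> linarith
        · show ⟪a1+a2, act w q⟫ < 0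
          rw [inner_add_left, h1, h2]
          rcases he with rfl | rfl <;> push_cast at cm3 ⊢ <;> linarith
    rcases hphi with (hpos | hpos | hpos) | (hneg | hneg | hneg)
    · exfalso
      refine hElim (ptv a1 a2 (-1.5) 1.25) (hR ⟨by rw [hptv1]; norm_num, by rw [hptv2]; norm_num,
        by rw [hptv3]; norm_num⟩) ?_
      rw [hpos]
      refine Or.inl (Or.inl ⟨?_, ?_⟩) <;> rw [inner_add_right, hptv1, hnorm1] <;> norm_num
    · exfalso
      refine hElim (ptv a1 a2 (-2.5) 2) (hR ⟨by rw [hptv1]; norm_num, by rw [hptv2]; norm_num,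
        by rw [hptv3]; norm_num⟩) ?_
      rw [hpos]
      refine Or.inr ⟨?_, ?_⟩ <;> rw [inner_add_right, hptv3, gt2] <;> norm_num
    · exfalso
      refine hElim (ptv a1 a2 (-3) 1.5) (hR ⟨by rw [hptv1]; norm_num, by rw [hptv2]; norm_num,
        by rw [hptv3]; norm_num⟩) ?_
      rw [hpos]
      refine Or.inr ⟨?_, ?_⟩ <;> rw [inner_add_right, hptv3, gtt] <;> norm_num
    · -- good case : α = -a1
      have hα' : α = -a1 := by rw [← hneg, neg_neg]
      rw [hα'] at hk hr hwq ⊢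
      have hval : ⟪-a1, act w q⟫ = ((-m1-1:ℤ):ℝ) + (2-(e:ℝ))/3 := by
        rw [inner_neg_left, h1]; push_cast; ring
      have hkeq : k = -m1 := by
        have hlow := hwq.1
        have hhigh := hwq.2
        rw [hval] at hlow hhigh
        have hk1 : (k:ℝ) < ((-m1-1:ℤ):ℝ) + 2 := by
          rcases he with rfl|rfl <;> push_cast at hlow ⊢ <;> linarith
        have hk2 : ((-m1-1:ℤ):ℝ) < (k:ℝ) := by
          rcases he with rfl|rfl <;> push_cast at hhigh ⊢ <;> linarith
        have i1 : k < -m1-1+2 := by exact_mod_cast hk1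
        have i2 : -m1-1 < k := by exact_mod_cast hk2
        omega
      have hact : act (r*w) q = sRefl (-a1) k (act w q) := by
        rw [show act (r*w) q = act r (act w q) from rfl, hr]
      have hkr : (k:ℝ) = -(m1:ℝ) := by
        have : (k:ℝ) = ((-m1:ℤ):ℝ) := congrArg (fun z : ℤ => (z:ℝ)) hkeq
        rw [this]; push_cast; ring
      have e1' : ⟪a1, act (r*w) q⟫ = ((m1-1 : ℤ):ℝ) + (1 + ((1-e:ℤ):ℝ))/3 := by
        rw [hact, sRefl_neg, inner_sRefl, hnorm1, h1]
        push_cast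
        rw [hkr]; ring
      have e2' : ⟪a2, act (r*w) q⟫ = ((m2+e : ℤ):ℝ) + (1 + ((1-e:ℤ):ℝ))/3 := by
        rw [hact, sRefl_neg, inner_sRefl, h21, h1, h2]
        push_cast
        rw [hkr]; ring
      have hformE : ∀ x : V, ⟪-a1, act w x⟫ =
          ((-m.1 : ℤ):ℝ) * ⟪a1,x⟫ + ((-m.2.1 : ℤ):ℝ) * ⟪a2,x⟫ + ((-u:ℤ):ℝ) := by
        intro x
        rw [inner_neg_left, hA1 x]; push_cast; ring
      have hrowE : ((-m.1, -m.2.1) : ℤ×ℤ) ∈ rowL := rowL_neg (m.1, m.2.1) hrow1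
      have hNw' := Nw_val hnorm1 hnorm2 hip hq1 hq2 (r*w) (m1-1) (m2+e) (1-e)
        (by omega) e1' e2'
      refine ⟨by omega, ?_, ?_⟩
      · intro hNT
        rcases he with rfl | rfl
        · rw [len_eq hnorm1 hnorm2 hip hq1 hq2 (r*w), len_eq hnorm1 hnorm2 hip hq1 hq2 w,
            hNw', hNw]
          omega
        · exfalso
          obtain ⟨x, hx, y, hy, hxy⟩ := hNT
          exact hxy (vertex_subsingleton hnorm1 hnorm2 hip hq1 hq2 w (-a1) k
            (-m.1) (-m.2.1) (-u) hrowE hformE (by omega) hx hy)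
      · intro hSing
        rcases he with rfl | rfl
        · exfalso
          obtain ⟨p, hp⟩ := hSing
          obtain ⟨x, hx, y, hy, hxy⟩ := edge_nontrivial hnorm1 hnorm2 hip hq1 hq2 w (-a1) k
            (-m.1) (-m.2.1) (-u) hrowE hformE (by omega)
          rw [hp] at hx hy
          exact hxy (hx.trans hy.symm)
        · rw [len_eq hnorm1 hnorm2 hip hq1 hq2 (r*w), len_eq hnorm1 hnorm2 hip hq1 hq2 w,
            hNw', hNw]
          omega
    · have hα' : α = -a2 := by rw [← hneg, neg_neg]
      exfalso
      refine hElim (ptv a1 a2 (-3) 2.5) (hR ⟨by rw [hptv1]; norm_num, by rw [hptv2]; norm_num,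
        by rw [hptv3]; norm_num⟩) ?_
      rw [hα']
      refine Or.inl (Or.inr ⟨?_, ?_⟩) <;>
        rw [inner_add_right, hptv2, inner_neg_right, hnorm2] <;> norm_num
    · have hα' : α = -(a1+a2) := by rw [← hneg, neg_neg]
      exfalso
      refine hElim (ptv a1 a2 (-2) 1.5) (hR ⟨by rw [hptv1]; norm_num, by rw [hptv2]; norm_num,
        by rw [hptv3]; norm_num⟩) ?_
      rw [hα']
      refine Or.inl (Or.inr ⟨?_, ?_⟩) <;>
        rw [inner_add_right, hptv2, inner_neg_right, g2t] <;> norm_num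
  · -- chamber D: m1 ≤ -1, m2 ≥ 1, m3 ≥ 1 : α = a2
    have cm1 : (m1:ℝ) ≤ -1 := by exact_mod_cast c1
    have cm2 : (1:ℝ) ≤ (m2:ℝ) := by exact_mod_cast c2
    have cm3 : (1:ℝ) ≤ ((m1+m2+e:ℤ):ℝ) := by exact_mod_cast c3
    have hR : {x : V | ⟪a1,x⟫ < 0 ∧ 1 < ⟪a2,x⟫ ∧ 1 < ⟪a1+a2,x⟫} ⊆ chamberOf a1 a2 q w := by
      apply chamber_sub
      · exact (convex_inner_lt a1 0).inter ((convex_inner_gt a2 1).inter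
          (convex_inner_gt (a1+a2) 1))
      · rintro x ⟨hx1, hx2, hx3⟩ ((h|h)|h)
        · exact absurd hx1 (not_lt.mpr h.1)
        · exact absurd hx2 (not_lt.mpr h.2)
        · exact absurd hx3 (not_lt.mpr h.2)
      · refine ⟨?_, ?_, ?_⟩
        · show ⟪a1, act w q⟫ < 0
          rw [h1]; rcases he with rfl | rfl <;> push_cast at cm1 ⊢ <;> linarith
        · show (1:ℝ) < ⟪a2, act w q⟫
          rw [h2]; rcases he with rfl | rfl <;> push_cast at cm2 ⊢ <;> linarith
        · show (1:ℝ) < ⟪a1+a2, act w q⟫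
          rw [inner_add_left, h1, h2]
          rcases he with rfl | rfl <;> push_cast at cm3 ⊢ <;> linarith
    rcases hphi with (hpos | hpos | hpos) | (hneg | hneg | hneg)
    · exfalso
      refine hElim (ptv a1 a2 (-1.5) 4) (hR ⟨by rw [hptv1]; norm_num, by rw [hptv2]; norm_num,
        by rw [hptv3]; norm_num⟩) ?_
      rw [hpos]
      refine Or.inl (Or.inl ⟨?_, ?_⟩) <;> rw [inner_add_right, hptv1, hnorm1] <;> norm_num
    · -- good case : α = a2
      rw [hpos] at hk hr hwq ⊢
      have hkeq : k = m2 + 1 := by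
        have hlow := hwq.1
        have hhigh := hwq.2
        rw [h2] at hlow hhigh
        have hk1 : (k:ℝ) < (m2:ℝ) + 2 := by
          rcases he with rfl|rfl <;> push_cast at hlow ⊢ <;> linarith
        have hk2 : (m2:ℝ) < (k:ℝ) := by
          rcases he with rfl|rfl <;> push_cast at hhigh ⊢ <;> linarith
        have i1 : k < m2 + 2 := by exact_mod_cast hk1
        have i2 : m2 < k := by exact_mod_cast hk2
        omega
      have hact : act (r*w) q = sRefl a2 k (act w q) := by
        rw [show act (r*w) q = act r (act w q) from rfl, hr]
      have hkr : (k:ℝ) = (m2:ℝ) + 1 := by exact_mod_cast hkeq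
      have e1' : ⟪a1, act (r*w) q⟫ = ((m1+e-1 : ℤ):ℝ) + (1 + ((1-e:ℤ):ℝ))/3 := by
        rw [hact, inner_sRefl, hip, h1, h2, hkr]; push_cast; ring
      have e2' : ⟪a2, act (r*w) q⟫ = ((m2+1 : ℤ):ℝ) + (1 + ((1-e:ℤ):ℝ))/3 := by
        rw [hact, inner_sRefl, hnorm2, h2, hkr]; push_cast; ring
      have hNw' := Nw_val hnorm1 hnorm2 hip hq1 hq2 (r*w) (m1+e-1) (m2+1) (1-e)
        (by omega) e1' e2'
      refine ⟨by omega, ?_, ?_⟩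
      · intro hNT
        rcases he with rfl | rfl
        · exfalso
          obtain ⟨x, hx, y, hy, hxy⟩ := hNT
          exact hxy (vertex_subsingleton hnorm1 hnorm2 hip hq1 hq2 w a2 k m.2.2.1 m.2.2.2 v
            hrow2 (fun x => (hd x).2) (by omega) hx hy)
        · rw [len_eq hnorm1 hnorm2 hip hq1 hq2 (r*w), len_eq hnorm1 hnorm2 hip hq1 hq2 w,
            hNw', hNw]
          omega
      · intro hSing
        rcases he with rfl | rfl
        · rw [len_eq hnorm1 hnorm2 hip hq1 hq2 (r*w), len_eq hnorm1 hnorm2 hip hq1 hq2 w,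
            hNw', hNw]
          omega
        · exfalso
          obtain ⟨p, hp⟩ := hSing
          obtain ⟨x, hx, y, hy, hxy⟩ := edge_nontrivial hnorm1 hnorm2 hip hq1 hq2 w a2 k
            m.2.2.1 m.2.2.2 v hrow2 (fun x => (hd x).2) (by omega)
          rw [hp] at hx hy
          exact hxy (hx.trans hy.symm)
    · exfalso
      refine hElim (ptv a1 a2 (-0.5) 4) (hR ⟨by rw [hptv1]; norm_num, by rw [hptv2]; norm_num,
        by rw [hptv3]; norm_num⟩) ?_
      rw [hpos]
      refine Or.inl (Or.inl ⟨?_, ?_⟩) <;> rw [inner_add_right, hptv1, g1t] <;> norm_num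
    · have hα' : α = -a1 := by rw [← hneg, neg_neg]
      exfalso
      refine hElim (ptv a1 a2 (-2.5) 4) (hR ⟨by rw [hptv1]; norm_num, by rw [hptv2]; norm_num,
        by rw [hptv3]; norm_num⟩) ?_
      rw [hα']
      refine Or.inr ⟨?_, ?_⟩ <;>
        rw [inner_add_right, hptv3, inner_neg_right, gt1] <;> norm_num
    · have hα' : α = -a2 := by rw [← hneg, neg_neg]
      exfalso
      refine hElim (ptv a1 a2 (-0.5) 2.5) (hR ⟨by rw [hptv1]; norm_num, by rw [hptv2]; norm_num,
        by rw [hptv3]; norm_num⟩) ?_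
      rw [hα']
      refine Or.inl (Or.inr ⟨?_, ?_⟩) <;>
        rw [inner_add_right, hptv2, inner_neg_right, hnorm2] <;> norm_num
    · have hα' : α = -(a1+a2) := by rw [← hneg, neg_neg]
      exfalso
      refine hElim (ptv a1 a2 (-0.25) 1.5) (hR ⟨by rw [hptv1]; norm_num, by rw [hptv2]; norm_num,
        by rw [hptv3]; norm_num⟩) ?_
      rw [hα']
      refine Or.inl (Or.inr ⟨?_, ?_⟩) <;>
        rw [inner_add_right, hptv2, inner_neg_right, g2t] <;> norm_num
  · -- chamber C: m1 ≥ 1, m2 ≤ -1, m3 ≤ -1 : α = -a2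
    have cm1 : (1:ℝ) ≤ (m1:ℝ) := by exact_mod_cast c1
    have cm2 : (m2:ℝ) ≤ -1 := by exact_mod_cast c2
    have cm3 : ((m1+m2+e:ℤ):ℝ) ≤ -1 := by exact_mod_cast c3
    have hR : {x : V | 1 < ⟪a1,x⟫ ∧ ⟪a2,x⟫ < 0 ∧ ⟪a1+a2,x⟫ < 0} ⊆ chamberOf a1 a2 q w := by
      apply chamber_sub
      · exact (convex_inner_gt a1 1).inter ((convex_inner_lt a2 0).inter
          (convex_inner_lt (a1+a2) 0))
      · rintro x ⟨hx1, hx2, hx3⟩ ((h|h)|h)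
        · exact absurd hx1 (not_lt.mpr h.2)
        · exact absurd hx2 (not_lt.mpr h.1)
        · exact absurd hx3 (not_lt.mpr h.1)
      · refine ⟨?_, ?_, ?_⟩
        · show (1:ℝ) < ⟪a1, act w q⟫
          rw [h1]; rcases he with rfl | rfl <;> push_cast at cm1 ⊢ <;> linarith
        · show ⟪a2, act w q⟫ < 0
          rw [h2]; rcases he with rfl | rfl <;> push_cast at cm2 ⊢ <;> linarith
        · show ⟪a1+a2, act w q⟫ < 0
          rw [inner_add_left, h1, h2]
          rcases he with rfl | rfl <;> push_cast at cm3 ⊢ <;> linarith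
    rcases hphi with (hpos | hpos | hpos) | (hneg | hneg | hneg)
    · exfalso
      refine hElim (ptv a1 a2 2 (-2.5)) (hR ⟨by rw [hptv1]; norm_num, by rw [hptv2]; norm_num,
        by rw [hptv3]; norm_num⟩) ?_
      rw [hpos]
      refine Or.inr ⟨?_, ?_⟩ <;> rw [inner_add_right, hptv3, gt1] <;> norm_num
    · exfalso
      refine hElim (ptv a1 a2 1.25 (-1.5)) (hR ⟨by rw [hptv1]; norm_num, by rw [hptv2]; norm_num,
        by rw [hptv3]; norm_num⟩) ?_
      rw [hpos]
      refine Or.inl (Or.inr ⟨?_, ?_⟩) <;> rw [inner_add_right, hptv2, hnorm2] <;> norm_num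
    · exfalso
      refine hElim (ptv a1 a2 1.5 (-3)) (hR ⟨by rw [hptv1]; norm_num, by rw [hptv2]; norm_num,
        by rw [hptv3]; norm_num⟩) ?_
      rw [hpos]
      refine Or.inr ⟨?_, ?_⟩ <;> rw [inner_add_right, hptv3, gtt] <;> norm_num
    · have hα' : α = -a1 := by rw [← hneg, neg_neg]
      exfalso
      refine hElim (ptv a1 a2 2.5 (-3)) (hR ⟨by rw [hptv1]; norm_num, by rw [hptv2]; norm_num,
        by rw [hptv3]; norm_num⟩) ?_
      rw [hα']
      refine Or.inl (Or.inl ⟨?_, ?_⟩) <;>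
        rw [inner_add_right, hptv1, inner_neg_right, hnorm1] <;> norm_num
    · -- good case : α = -a2
      have hα' : α = -a2 := by rw [← hneg, neg_neg]
      rw [hα'] at hk hr hwq ⊢
      have hval : ⟪-a2, act w q⟫ = ((-m2-1:ℤ):ℝ) + (2-(e:ℝ))/3 := by
        rw [inner_neg_left, h2]; push_cast; ring
      have hkeq : k = -m2 := by
        have hlow := hwq.1
        have hhigh := hwq.2
        rw [hval] at hlow hhigh
        have hk1 : (k:ℝ) < ((-m2-1:ℤ):ℝ) + 2 := by
          rcases he with rfl|rfl <;> push_cast at hlow ⊢ <;> linarith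
        have hk2 : ((-m2-1:ℤ):ℝ) < (k:ℝ) := by
          rcases he with rfl|rfl <;> push_cast at hhigh ⊢ <;> linarith
        have i1 : k < -m2-1+2 := by exact_mod_cast hk1
        have i2 : -m2-1 < k := by exact_mod_cast hk2
        omega
      have hact : act (r*w) q = sRefl (-a2) k (act w q) := by
        rw [show act (r*w) q = act r (act w q) from rfl, hr]
      have hkr : (k:ℝ) = -(m2:ℝ) := by
        have : (k:ℝ) = ((-m2:ℤ):ℝ) := congrArg (fun z : ℤ => (z:ℝ)) hkeq
        rw [this]; push_cast; ring
      have e1' : ⟪a1, act (r*w) q⟫ = ((m1+e : ℤ):ℝ) + (1 + ((1-e:ℤ):ℝ))/3 := by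
        rw [hact, sRefl_neg, inner_sRefl, hip, h1, h2]
        push_cast
        rw [hkr]; ring
      have e2' : ⟪a2, act (r*w) q⟫ = ((m2-1 : ℤ):ℝ) + (1 + ((1-e:ℤ):ℝ))/3 := by
        rw [hact, sRefl_neg, inner_sRefl, hnorm2, h2]
        push_cast
        rw [hkr]; ring
      have hformC : ∀ x : V, ⟪-a2, act w x⟫ =
          ((-m.2.2.1 : ℤ):ℝ) * ⟪a1,x⟫ + ((-m.2.2.2 : ℤ):ℝ) * ⟪a2,x⟫ + ((-v:ℤ):ℝ) := by
        intro x
        rw [inner_neg_left, hA2 x]; push_cast; ring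
      have hrowC : ((-m.2.2.1, -m.2.2.2) : ℤ×ℤ) ∈ rowL := rowL_neg (m.2.2.1, m.2.2.2) hrow2
      have hNw' := Nw_val hnorm1 hnorm2 hip hq1 hq2 (r*w) (m1+e) (m2-1) (1-e)
        (by omega) e1' e2'
      refine ⟨by omega, ?_, ?_⟩
      · intro hNT
        rcases he with rfl | rfl
        · rw [len_eq hnorm1 hnorm2 hip hq1 hq2 (r*w), len_eq hnorm1 hnorm2 hip hq1 hq2 w,
            hNw', hNw]
          omega
        · exfalso
          obtain ⟨x, hx, y, hy, hxy⟩ := hNT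
          exact hxy (vertex_subsingleton hnorm1 hnorm2 hip hq1 hq2 w (-a2) k
            (-m.2.2.1) (-m.2.2.2) (-v) hrowC hformC (by omega) hx hy)
      · intro hSing
        rcases he with rfl | rfl
        · exfalso
          obtain ⟨p, hp⟩ := hSing
          obtain ⟨x, hx, y, hy, hxy⟩ := edge_nontrivial hnorm1 hnorm2 hip hq1 hq2 w (-a2) k
            (-m.2.2.1) (-m.2.2.2) (-v) hrowC hformC (by omega)
          rw [hp] at hx hy
          exact hxy (hx.trans hy.symm)
        · rw [len_eq hnorm1 hnorm2 hip hq1 hq2 (r*w), len_eq hnorm1 hnorm2 hip hq1 hq2 w,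
            hNw', hNw]
          omega
    · have hα' : α = -(a1+a2) := by rw [← hneg, neg_neg]
      exfalso
      refine hElim (ptv a1 a2 1.5 (-2)) (hR ⟨by rw [hptv1]; norm_num, by rw [hptv2]; norm_num,
        by rw [hptv3]; norm_num⟩) ?_
      rw [hα']
      refine Or.inl (Or.inl ⟨?_, ?_⟩) <;>
        rw [inner_add_right, hptv1, inner_neg_right, g1t] <;> norm_num
  · -- chamber B: m1 ≥ 1, m2 ≤ -1, m3 ≥ 1 : α = a1
    have hR : {x : V | 1 < ⟪a1,x⟫ ∧ ⟪a2,x⟫ < 0 ∧ 1 < ⟪a1+a2,x⟫} ⊆ chamberOf a1 a2 q w := by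
      apply chamber_sub
      · exact (convex_inner_gt a1 1).inter ((convex_inner_lt a2 0).inter
          (convex_inner_gt (a1+a2) 1))
      · rintro x ⟨hx1, hx2, hx3⟩ ((h|h)|h)
        · exact absurd hx1 (not_lt.mpr h.2)
        · exact absurd hx2 (not_lt.mpr h.1)
        · exact absurd hx3 (not_lt.mpr h.2)
      · refine ⟨?_, ?_, ?_⟩
        · show (1:ℝ) < ⟪a1, act w q⟫
          rw [h1]
          have : (1:ℝ) ≤ (m1:ℝ) := by exact_mod_cast c1
          linarith
        · show ⟪a2, act w q⟫ < 0
          rw [h2]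
          have : (m2:ℝ) ≤ -1 := by exact_mod_cast c2
          linarith
        · show (1:ℝ) < ⟪a1+a2, act w q⟫
          rw [inner_add_left, h1, h2]
          have : (1:ℝ) ≤ ((m1+m2+e : ℤ):ℝ) := by exact_mod_cast c3
          push_cast at this ⊢
          linarith
    -- identify α = a1
    rcases hphi with (hpos | hpos | hpos) | (hneg | hneg | hneg)
    · -- α = a1 : the good case
      rw [hpos] at hk hr hwq ⊢
      have hkeq : k = m1 + 1 := by
        have hlow : (k:ℝ) - 1 < ⟪a1, act w q⟫ := hwq.1
        have hhigh : ⟪a1, act w q⟫ < k := hwq.2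
        rw [h1] at hlow hhigh
        have hk1 : (k:ℝ) < (m1:ℝ) + 2 := by
          rcases he with rfl|rfl <;> push_cast at hlow ⊢ <;> linarith
        have hk2 : (m1:ℝ) < (k:ℝ) := by
          rcases he with rfl|rfl <;> push_cast at hhigh ⊢ <;> linarith
        have i1 : k < m1 + 2 := by exact_mod_cast hk1
        have i2 : m1 < k := by exact_mod_cast hk2
        omega
      have hact : act (r*w) q = sRefl a1 k (act w q) := by
        rw [show act (r*w) q = act r (act w q) from rfl, hr]
      have hkr : (k:ℝ) = (m1:ℝ) + 1 := by exact_mod_cast hkeq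
      have e1' : ⟪a1, act (r*w) q⟫ = ((m1+1 : ℤ):ℝ) + (1 + ((1-e:ℤ):ℝ))/3 := by
        rw [hact, inner_sRefl, hnorm1, h1, hkr]; push_cast; ring
      have e2' : ⟪a2, act (r*w) q⟫ = ((m2+e-1 : ℤ):ℝ) + (1 + ((1-e:ℤ):ℝ))/3 := by
        rw [hact, inner_sRefl, h21, h1, h2, hkr]; push_cast; ring
      have hNw' := Nw_val hnorm1 hnorm2 hip hq1 hq2 (r*w) (m1+1) (m2+e-1) (1-e) (by omega) e1' e2'
      refine ⟨by omega, ?_, ?_⟩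
      · intro hNT
        rcases he with rfl | rfl
        · exfalso
          obtain ⟨x, hx, y, hy, hxy⟩ := hNT
          exact hxy (vertex_subsingleton hnorm1 hnorm2 hip hq1 hq2 w a1 k m.1 m.2.1 u hrow1
            (fun x => (hd x).1) (by omega) hx hy)
        · rw [len_eq hnorm1 hnorm2 hip hq1 hq2 (r*w), len_eq hnorm1 hnorm2 hip hq1 hq2 w,
            hNw', hNw]
          omega
      · intro hSing
        rcases he with rfl | rfl
        · rw [len_eq hnorm1 hnorm2 hip hq1 hq2 (r*w), len_eq hnorm1 hnorm2 hip hq1 hq2 w,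
            hNw', hNw]
          omega
        · exfalso
          obtain ⟨p, hp⟩ := hSing
          obtain ⟨x, hx, y, hy, hxy⟩ := edge_nontrivial hnorm1 hnorm2 hip hq1 hq2 w a1 k
            m.1 m.2.1 u hrow1 (fun x => (hd x).1) (by omega)
          rw [hp] at hx hy
          exact hxy (hx.trans hy.symm)
    · -- α = a2
      exfalso
      refine hElim (ptv a1 a2 4 (-1.5)) (hR ⟨by rw [hptv1]; norm_num, by rw [hptv2]; norm_num,
        by rw [hptv3]; norm_num⟩) ?_
      rw [hpos]
      refine Or.inl (Or.inr ⟨?_, ?_⟩) <;>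
        rw [inner_add_right, hptv2, hnorm2] <;> norm_num
    · -- α = a1 + a2
      exfalso
      refine hElim (ptv a1 a2 4 (-0.5)) (hR ⟨by rw [hptv1]; norm_num, by rw [hptv2]; norm_num,
        by rw [hptv3]; norm_num⟩) ?_
      rw [hpos]
      refine Or.inl (Or.inr ⟨?_, ?_⟩) <;>
        rw [inner_add_right, hptv2, g2t] <;> norm_num
    · -- -α = a1, i.e. α = -a1
      have hα' : α = -a1 := by rw [← hneg, neg_neg]
      exfalso
      refine hElim (ptv a1 a2 2.5 (-0.5)) (hR ⟨by rw [hptv1]; norm_num, by rw [hptv2]; norm_num,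
        by rw [hptv3]; norm_num⟩) ?_
      rw [hα']
      refine Or.inl (Or.inl ⟨?_, ?_⟩) <;>
        rw [inner_add_right, hptv1, inner_neg_right, hnorm1] <;> norm_num
    · -- α = -a2
      have hα' : α = -a2 := by rw [← hneg, neg_neg]
      exfalso
      refine hElim (ptv a1 a2 4 (-2.5)) (hR ⟨by rw [hptv1]; norm_num, by rw [hptv2]; norm_num,
        by rw [hptv3]; norm_num⟩) ?_
      rw [hα']
      refine Or.inr ⟨?_, ?_⟩ <;>
        rw [inner_add_right, hptv3, inner_neg_right, gt2] <;> norm_num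
    · -- α = -(a1+a2)
      have hα' : α = -(a1+a2) := by rw [← hneg, neg_neg]
      exfalso
      refine hElim (ptv a1 a2 1.5 (-0.25)) (hR ⟨by rw [hptv1]; norm_num, by rw [hptv2]; norm_num,
        by rw [hptv3]; norm_num⟩) ?_
      rw [hα']
      refine Or.inl (Or.inl ⟨?_, ?_⟩) <;>
        rw [inner_add_right, hptv1, inner_neg_right, g1t] <;> norm_num
  · -- m1 ≥ 1, m2 ≥ 1, m3 ≤ -1: impossible
    exfalso; omega
  · -- chamber A: m1 ≥ 1, m2 ≥ 1, m3 ≥ 1 : α = a1+a2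
    have cm1 : (1:ℝ) ≤ (m1:ℝ) := by exact_mod_cast c1
    have cm2 : (1:ℝ) ≤ (m2:ℝ) := by exact_mod_cast c2
    have cm3 : (1:ℝ) ≤ ((m1+m2+e:ℤ):ℝ) := by exact_mod_cast c3
    have hR : {x : V | 1 < ⟪a1,x⟫ ∧ 1 < ⟪a2,x⟫ ∧ 1 < ⟪a1+a2,x⟫} ⊆ chamberOf a1 a2 q w := by
      apply chamber_sub
      · exact (convex_inner_gt a1 1).inter ((convex_inner_gt a2 1).inter
          (convex_inner_gt (a1+a2) 1))
      · rintro x ⟨hx1, hx2, hx3⟩ ((h|h)|h)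
        · exact absurd hx1 (not_lt.mpr h.2)
        · exact absurd hx2 (not_lt.mpr h.2)
        · exact absurd hx3 (not_lt.mpr h.2)
      · refine ⟨?_, ?_, ?_⟩
        · show (1:ℝ) < ⟪a1, act w q⟫
          rw [h1]; rcases he with rfl | rfl <;> push_cast at cm1 ⊢ <;> linarith
        · show (1:ℝ) < ⟪a2, act w q⟫
          rw [h2]; rcases he with rfl | rfl <;> push_cast at cm2 ⊢ <;> linarith
        · show (1:ℝ) < ⟪a1+a2, act w q⟫
          rw [inner_add_left, h1, h2]
          rcases he with rfl | rfl <;> push_cast at cm3 ⊢ <;> linarith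
    rcases hphi with (hpos | hpos | hpos) | (hneg | hneg | hneg)
    · exfalso
      refine hElim (ptv a1 a2 2 1.5) (hR ⟨by rw [hptv1]; norm_num, by rw [hptv2]; norm_num,
        by rw [hptv3]; norm_num⟩) ?_
      rw [hpos]
      refine Or.inl (Or.inr ⟨?_, ?_⟩) <;> rw [inner_add_right, hptv2, h21] <;> norm_num
    · exfalso
      refine hElim (ptv a1 a2 1.5 2) (hR ⟨by rw [hptv1]; norm_num, by rw [hptv2]; norm_num,
        by rw [hptv3]; norm_num⟩) ?_
      rw [hpos]
      refine Or.inl (Or.inl ⟨?_, ?_⟩) <;> rw [inner_add_right, hptv1, hip] <;> norm_num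
    · -- good case : α = a1+a2
      rw [hpos] at hk hr hwq ⊢
      have hval : ⟪a1+a2, act w q⟫ = ((m1+m2+e:ℤ):ℝ) + (2-(e:ℝ))/3 := by
        rw [inner_add_left, h1, h2]; push_cast; ring
      have hkeq : k = m1+m2+e+1 := by
        have hlow := hwq.1
        have hhigh := hwq.2
        rw [hval] at hlow hhigh
        have hk1 : (k:ℝ) < ((m1+m2+e:ℤ):ℝ) + 2 := by
          rcases he with rfl|rfl <;> push_cast at hlow ⊢ <;> linarith
        have hk2 : ((m1+m2+e:ℤ):ℝ) < (k:ℝ) := by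
          rcases he with rfl|rfl <;> push_cast at hhigh ⊢ <;> linarith
        have i1 : k < m1+m2+e+2 := by exact_mod_cast hk1
        have i2 : m1+m2+e < k := by exact_mod_cast hk2
        omega
      have hact : act (r*w) q = sRefl (a1+a2) k (act w q) := by
        rw [show act (r*w) q = act r (act w q) from rfl, hr]
      have hkr : (k:ℝ) = (m1:ℝ)+(m2:ℝ)+(e:ℝ)+1 := by
        have : (k:ℝ) = ((m1+m2+e+1:ℤ):ℝ) := congrArg (fun z : ℤ => (z:ℝ)) hkeq
        rw [this]; push_cast; ring
      have e1' : ⟪a1, act (r*w) q⟫ = ((m1+e : ℤ):ℝ) + (1 + ((1-e:ℤ):ℝ))/3 := by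
        rw [hact, inner_sRefl, g1t, inner_add_left, h1, h2]
        push_cast
        rw [hkr]; ring
      have e2' : ⟪a2, act (r*w) q⟫ = ((m2+e : ℤ):ℝ) + (1 + ((1-e:ℤ):ℝ))/3 := by
        rw [hact, inner_sRefl, g2t, inner_add_left, h1, h2]
        push_cast
        rw [hkr]; ring
      have hformA : ∀ x : V, ⟪a1+a2, act w x⟫ =
          ((m.1+m.2.2.1 : ℤ):ℝ) * ⟪a1,x⟫ + ((m.2.1+m.2.2.2 : ℤ):ℝ) * ⟪a2,x⟫ + ((u+v:ℤ):ℝ) := by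
        intro x
        rw [inner_add_left, hA1 x, hA2 x]; push_cast; ring
      have hNw' := Nw_val hnorm1 hnorm2 hip hq1 hq2 (r*w) (m1+e) (m2+e) (1-e)
        (by omega) e1' e2'
      refine ⟨by omega, ?_, ?_⟩
      · intro hNT
        rcases he with rfl | rfl
        · rw [len_eq hnorm1 hnorm2 hip hq1 hq2 (r*w), len_eq hnorm1 hnorm2 hip hq1 hq2 w,
            hNw', hNw]
          omega
        · exfalso
          obtain ⟨x, hx, y, hy, hxy⟩ := hNT
          exact hxy (vertex_subsingleton hnorm1 hnorm2 hip hq1 hq2 w (a1+a2) k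
            (m.1+m.2.2.1) (m.2.1+m.2.2.2) (u+v) hrow3 hformA (by omega) hx hy)
      · intro hSing
        rcases he with rfl | rfl
        · exfalso
          obtain ⟨p, hp⟩ := hSing
          obtain ⟨x, hx, y, hy, hxy⟩ := edge_nontrivial hnorm1 hnorm2 hip hq1 hq2 w (a1+a2) k
            (m.1+m.2.2.1) (m.2.1+m.2.2.2) (u+v) hrow3 hformA (by omega)
          rw [hp] at hx hy
          exact hxy (hx.trans hy.symm)
        · rw [len_eq hnorm1 hnorm2 hip hq1 hq2 (r*w), len_eq hnorm1 hnorm2 hip hq1 hq2 w,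
            hNw', hNw]
          omega
    · have hα' : α = -a1 := by rw [← hneg, neg_neg]
      exfalso
      refine hElim (ptv a1 a2 2.5 2) (hR ⟨by rw [hptv1]; norm_num, by rw [hptv2]; norm_num,
        by rw [hptv3]; norm_num⟩) ?_
      rw [hα']
      refine Or.inl (Or.inl ⟨?_, ?_⟩) <;>
        rw [inner_add_right, hptv1, inner_neg_right, hnorm1] <;> norm_num
    · have hα' : α = -a2 := by rw [← hneg, neg_neg]
      exfalso
      refine hElim (ptv a1 a2 2 2.5) (hR ⟨by rw [hptv1]; norm_num, by rw [hptv2]; norm_num,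
        by rw [hptv3]; norm_num⟩) ?_
      rw [hα']
      refine Or.inl (Or.inr ⟨?_, ?_⟩) <;>
        rw [inner_add_right, hptv2, inner_neg_right, hnorm2] <;> norm_num
    · have hα' : α = -(a1+a2) := by rw [← hneg, neg_neg]
      exfalso
      refine hElim (ptv a1 a2 1.5 2) (hR ⟨by rw [hptv1]; norm_num, by rw [hptv2]; norm_num,
        by rw [hptv3]; norm_num⟩) ?_
      rw [hα']
      refine Or.inl (Or.inl ⟨?_, ?_⟩) <;>
        rw [inner_add_right, hptv1, inner_neg_right, g1t] <;> norm_num
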